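/- arXiv:1905.02548 — 6 statements merged into one kernel-verified Lean document; each statement's English description precedes it below -/
import Mathlib

section
/- Let D be a finite positive-semidefinite symmetric-matrix-valued Borel measure on R^d (i.e., each component D_{ij} is a finite signed Borel measure, D_{ij} = D_{ji}, and for every vector ξ in R^d the scalar measure (ξ⊗ξ):D = Σ_{i,j} ξ_i ξ_j D_{ij} is a non-negative measure). If ∫_{R^d} ∇φ : dD = 0 for every compactly supported C^1 vector field φ: R^d → R^d, then D ≡ 0. -/
open MeasureTheory Filter Topology
open scoped ENNReal BigOperators

/-- Integral of a real function against a signed measure, defined via the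
Jordan decomposition. -/
noncomputable def MeasureTheory.SignedMeasure.intg {α : Type*} [MeasurableSpace α]
    (μ : MeasureTheory.SignedMeasure α) (f : α → ℝ) : ℝ :=
  (∫ x, f x ∂μ.toJordanDecomposition.posPart) -
    (∫ x, f x ∂μ.toJordanDecomposition.negPart)

namespace DivFreeAux

open Metric

variable {d : ℕ}

noncomputable def bump (d : ℕ) : ContDiffBump (0 : EuclideanSpace ℝ (Fin d)) :=
  ⟨1, 2, one_pos, one_lt_two⟩

noncomputable def rr (n : ℕ) : ℝ := ((n : ℝ) + 1)⁻¹

lemma rr_pos (n : ℕ) : 0 < rr n := by unfold rr; positivity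

noncomputable def φ (d : ℕ) (n : ℕ) : EuclideanSpace ℝ (Fin d) → EuclideanSpace ℝ (Fin d) :=
  fun x => bump d (rr n • x) • x

noncomputable def G (d : ℕ) (n : ℕ) (i j : Fin d) : EuclideanSpace ℝ (Fin d) → ℝ := fun x =>
  bump d (rr n • x) * (if i = j then 1 else 0)
    + (fderiv ℝ (bump d) (rr n • x) (rr n • EuclideanSpace.single j 1)) * x i

lemma contDiff_φ (n : ℕ) : ContDiff ℝ 1 (φ d n) := by
  have h1 : ContDiff ℝ 1 (fun y : EuclideanSpace ℝ (Fin d) => rr n • y) :=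
    contDiff_id.const_smul (rr n)
  exact (((bump d).contDiff (n := 1)).comp h1).smul contDiff_id

lemma hcs_φ (n : ℕ) : HasCompactSupport (φ d n) := by
  have hcb : HasCompactSupport (bump d : EuclideanSpace ℝ (Fin d) → ℝ) :=
    (bump d).hasCompactSupport
  have h1 : HasCompactSupport (fun y : EuclideanSpace ℝ (Fin d) => bump d (rr n • y)) := by
    have := hcb.comp_homeomorph
      (Homeomorph.smul (Units.mk0 (rr n) (rr_pos n).ne') :
        EuclideanSpace ℝ (Fin d) ≃ₜ EuclideanSpace ℝ (Fin d))
    convert this using 2 with y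
    rfl
  exact h1.smul_right

lemma fderiv_φ (n : ℕ) (x : EuclideanSpace ℝ (Fin d)) (i j : Fin d) :
    fderiv ℝ (φ d n) x (EuclideanSpace.single j 1) i = G d n i j x := by
  set Θ := bump d
  set r := rr n
  have h1 : HasFDerivAt (fun y : EuclideanSpace ℝ (Fin d) => r • y)
      (r • ContinuousLinearMap.id ℝ _) x := by
    exact (hasFDerivAt_id x).const_smul r
  have h2 : HasFDerivAt Θ (fderiv ℝ Θ (r • x)) (r • x) :=
    ((Θ.contDiff (n := 1)).differentiable (by simp) (r • x)).hasFDerivAt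
  have h3 : HasFDerivAt (fun y : EuclideanSpace ℝ (Fin d) => Θ (r • y))
      ((fderiv ℝ Θ (r • x)).comp (r • ContinuousLinearMap.id ℝ _)) x := h2.comp x h1
  have h4 := h3.smul (hasFDerivAt_id x)
  have h5 : HasFDerivAt (φ d n)
      (Θ (r • x) • ContinuousLinearMap.id ℝ (EuclideanSpace ℝ (Fin d)) +
        ((fderiv ℝ (⇑Θ) (r • x)).comp
          (r • ContinuousLinearMap.id ℝ (EuclideanSpace ℝ (Fin d)))).smulRight x) x := h4
  rw [h5.fderiv]
  simp [G, EuclideanSpace.single_apply, PiLp.add_apply, PiLp.smul_apply, smul_eq_mul]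
  rfl

lemma continuous_G (n : ℕ) (i j : Fin d) : Continuous (G d n i j) := by
  have hsm : Continuous (fun x : EuclideanSpace ℝ (Fin d) => rr n • x) :=
    continuous_const_smul _
  have h1 : Continuous (fun x : EuclideanSpace ℝ (Fin d) => (bump d) (rr n • x)) :=
    ((bump d).continuous).comp hsm
  have h2 : Continuous (fun x : EuclideanSpace ℝ (Fin d) =>
      fderiv ℝ (bump d) (rr n • x) (rr n • EuclideanSpace.single j 1)) := by
    have hfd : Continuous (fderiv ℝ (bump d : EuclideanSpace ℝ (Fin d) → ℝ)) :=
      ((bump d).contDiff (n := 1)).continuous_fderiv (by simp)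
    exact (hfd.comp hsm).clm_apply continuous_const
  have h3 : Continuous (fun x : EuclideanSpace ℝ (Fin d) => x i) :=
    (EuclideanSpace.proj i).continuous
  exact (h1.mul continuous_const).add (h2.mul h3)

lemma abs_apply_le_norm (x : EuclideanSpace ℝ (Fin d)) (i : Fin d) : |x i| ≤ ‖x‖ := by
  rw [EuclideanSpace.norm_eq x, ← Real.sqrt_sq (abs_nonneg (x i)), sq_abs]
  apply Real.sqrt_le_sqrt
  have := Finset.single_le_sum (f := fun j => ‖x j‖ ^ 2) (fun j _ => by positivity)
    (Finset.mem_univ i)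
  simpa [Real.norm_eq_abs, sq_abs] using this

lemma exists_bound (d : ℕ) : ∃ C : ℝ, ∀ (n : ℕ) (i j : Fin d) (x : EuclideanSpace ℝ (Fin d)),
    |G d n i j x| ≤ C := by
  obtain ⟨K, hK⟩ := ((bump d).hasCompactSupport.fderiv (𝕜 := ℝ)).exists_bound_of_continuous
    (((bump d).contDiff (n := 1)).continuous_fderiv (by simp))
  have hK0 : 0 ≤ K := le_trans (norm_nonneg _) (hK 0)
  refine ⟨1 + 2 * K, fun n i j x => ?_⟩
  have hterm1 : |bump d (rr n • x) * (if i = j then 1 else 0)| ≤ 1 := by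
    rw [abs_mul]
    have h1 : |bump d (rr n • x)| ≤ 1 := by
      rw [abs_of_nonneg ((bump d).nonneg)]
      exact (bump d).le_one
    have h2 : |(if i = j then (1:ℝ) else 0)| ≤ 1 := by
      split <;> simp
    calc |bump d (rr n • x)| * |(if i = j then (1:ℝ) else 0)| ≤ 1 * 1 :=
          mul_le_mul h1 h2 (abs_nonneg _) zero_le_one
      _ = 1 := one_mul 1
  have hterm2 : |(fderiv ℝ (bump d) (rr n • x) (rr n • EuclideanSpace.single j 1)) * x i|
      ≤ 2 * K := by
    rcases le_or_gt ‖x‖ (2 * ((n : ℝ) + 1)) with hx | hx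
    · have h1 : |fderiv ℝ (bump d) (rr n • x) (rr n • EuclideanSpace.single j 1)|
          ≤ K * rr n := by
        calc |fderiv ℝ (bump d) (rr n • x) (rr n • EuclideanSpace.single j 1)|
            ≤ ‖fderiv ℝ (bump d) (rr n • x)‖ * ‖rr n • EuclideanSpace.single j (1:ℝ)‖ :=
              (fderiv ℝ (bump d) (rr n • x)).le_opNorm _
          _ ≤ K * rr n := by
              rw [norm_smul, EuclideanSpace.norm_single, Real.norm_eq_abs,
                abs_of_pos (rr_pos n)]
              simp only [norm_one, mul_one]
              exact mul_le_mul_of_nonneg_right (hK _) (rr_pos n).le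
      calc |(fderiv ℝ (bump d) (rr n • x) (rr n • EuclideanSpace.single j 1)) * x i|
          = |fderiv ℝ (bump d) (rr n • x) (rr n • EuclideanSpace.single j 1)| * |x i| :=
            abs_mul _ _
        _ ≤ (K * rr n) * (2 * ((n : ℝ) + 1)) :=
            mul_le_mul h1 ((abs_apply_le_norm x i).trans hx) (abs_nonneg _)
              (mul_nonneg hK0 (rr_pos n).le)
        _ = 2 * K * (rr n * ((n : ℝ) + 1)) := by ring
        _ = 2 * K := by
            rw [rr, inv_mul_cancel₀ (by positivity)]
            ring
    · have hout : fderiv ℝ (bump d) (rr n • x) = 0 := by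
        apply image_eq_zero_of_notMem_tsupport
        intro hmem
        have h1 : tsupport (fderiv ℝ (bump d : EuclideanSpace ℝ (Fin d) → ℝ))
            ⊆ closedBall 0 2 := by
          refine (tsupport_fderiv_subset ℝ).trans ?_
          rw [(bump d).tsupport_eq, show (bump d).rOut = 2 from rfl]
        have h2 := h1 hmem
        rw [mem_closedBall_zero_iff, norm_smul, Real.norm_eq_abs,
          abs_of_pos (rr_pos n)] at h2
        have h3 : rr n * ‖x‖ > rr n * (2 * ((n : ℝ) + 1)) :=
          mul_lt_mul_of_pos_left hx (rr_pos n)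
        have h4 : rr n * (2 * ((n : ℝ) + 1)) = 2 := by
          rw [rr]; field_simp
        linarith
      simp [hout]
      positivity
  calc |G d n i j x| ≤ _ + _ := abs_add_le _ _
    _ ≤ 1 + 2 * K := add_le_add hterm1 hterm2

lemma tendsto_G (i j : Fin d) (x : EuclideanSpace ℝ (Fin d)) :
    Tendsto (fun n => G d n i j x) atTop (𝓝 (if i = j then 1 else 0)) := by
  apply Tendsto.congr' _ tendsto_const_nhds
  rw [EventuallyEq, eventually_atTop]
  refine ⟨⌈‖x‖⌉₊, fun n hn => ?_⟩
  have hxn : ‖x‖ < (n : ℝ) + 1 := by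
    calc ‖x‖ ≤ (⌈‖x‖⌉₊ : ℝ) := Nat.le_ceil _
      _ ≤ (n : ℝ) := by exact_mod_cast hn
      _ < (n : ℝ) + 1 := by linarith
  have hmem : rr n • x ∈ ball (0 : EuclideanSpace ℝ (Fin d)) 1 := by
    rw [mem_ball_zero_iff, norm_smul, Real.norm_eq_abs, abs_of_pos (rr_pos n), rr,
      inv_mul_lt_iff₀ (by positivity), mul_one]
    exact hxn
  have hone : bump d (rr n • x) = 1 :=
    (bump d).one_of_mem_closedBall (ball_subset_closedBall hmem)
  have hfd : fderiv ℝ (bump d) (rr n • x) = 0 := by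
    have hev : (bump d : EuclideanSpace ℝ (Fin d) → ℝ) =ᶠ[𝓝 (rr n • x)] (fun _ => 1) := by
      filter_upwards [isOpen_ball.mem_nhds hmem] with y hy
      exact (bump d).one_of_mem_closedBall (ball_subset_closedBall hy)
    rw [hev.fderiv_eq, fderiv_fun_const]
    rfl
  simp [G, hone, hfd]

lemma signed_apply_eq {α : Type*} [MeasurableSpace α] (μ : SignedMeasure α) {s : Set α}
    (hs : MeasurableSet s) :
    μ s = (μ.toJordanDecomposition.posPart s).toReal
      - (μ.toJordanDecomposition.negPart s).toReal := by
  conv_lhs => rw [← μ.toSignedMeasure_toJordanDecomposition]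
  rw [JordanDecomposition.toSignedMeasure, VectorMeasure.sub_apply,
    Measure.toSignedMeasure_apply_measurable hs, Measure.toSignedMeasure_apply_measurable hs]
  rfl

lemma sum_single_collapse (d : ℕ) (i : Fin d) (f : Fin d → Fin d → ℝ)
    (ζ : Fin d → ℝ) (hζ : ζ = Pi.single i (1:ℝ)) :
    ∑ k, ∑ l, ζ k * ζ l * f k l = f i i := by
  subst hζ
  simp [Pi.single_apply, ite_mul, mul_ite, Finset.sum_ite_eq]

lemma sum_pair_collapse (d : ℕ) {i j : Fin d} (hij : i ≠ j) (b : ℝ) (f : Fin d → Fin d → ℝ)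
    (ξ : Fin d → ℝ) (hξ : ξ = Pi.single i (1:ℝ) + Pi.single j b) :
    ∑ k, ∑ l, ξ k * ξ l * f k l
      = f i i + b * f i j + b * f j i + b * b * f j j := by
  have hξ' : ∀ k, ξ k = (if k = i then 1 else 0) + (if k = j then b else 0) := by
    intro k; rw [hξ]; simp [Pi.single_apply]
  have key : ∀ g : Fin d → ℝ, ∑ k, ξ k * g k = g i + b * g j := by
    intro g
    rw [Finset.sum_congr rfl fun k _ => by rw [hξ' k]]
    simp [add_mul, ite_mul, Finset.sum_add_distrib, Finset.sum_ite_eq, hij]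
  have h1 : ∀ k, ∑ l, ξ k * ξ l * f k l = ξ k * (f k i + b * f k j) := by
    intro k
    rw [← key (fun l => f k l), Finset.mul_sum]
    exact Finset.sum_congr rfl fun l _ => by ring
  rw [Finset.sum_congr rfl fun k _ => h1 k, key (fun k => f k i + b * f k j)]
  ring

end DivFreeAux

open DivFreeAux

/-- If a finite, symmetric, positive-semidefinite matrix-valued Borel measure `D` on `ℝ^d`
is divergence-free in the sense of distributions (tested against compactly supported `C¹`
vector fields), then `D ≡ 0`. -/
theorem divergence_free_psd_matrix_measure_eq_zero
    (d : ℕ) (D : Fin d → Fin d → MeasureTheory.SignedMeasure (EuclideanSpace ℝ (Fin d)))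
    (hsym : ∀ i j, D i j = D j i)
    (hpsd : ∀ (ξ : Fin d → ℝ) (s : Set (EuclideanSpace ℝ (Fin d))), MeasurableSet s →
      0 ≤ ∑ i, ∑ j, ξ i * ξ j * (D i j) s)
    (hdiv : ∀ φ : EuclideanSpace ℝ (Fin d) → EuclideanSpace ℝ (Fin d),
      ContDiff ℝ 1 φ → HasCompactSupport φ →
      ∑ i, ∑ j,
        (D i j).intg (fun x => fderiv ℝ φ x (EuclideanSpace.single j (1 : ℝ)) i) = 0) :
    ∀ i j, D i j = 0 := by
  classical
  -- diagonal nonnegativity on every measurable set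
  have hdiagnn : ∀ (i : Fin d) (s : Set (EuclideanSpace ℝ (Fin d))), MeasurableSet s →
      0 ≤ (D i i) s := by
    intro i s hs
    have := hpsd (Pi.single i 1) s hs
    rwa [sum_single_collapse d i (fun k l => (D k l) s) _ rfl] at this
  -- Step 1: the sum of the total masses of the diagonal entries vanishes.
  have hsum : ∑ i, (D i i) Set.univ = 0 := by
    set S : ℕ → ℝ := fun n => ∑ i, ∑ j, (D i j).intg (G d n i j) with hSdef
    have hS0 : ∀ n, S n = 0 := by
      intro n
      have h := hdiv (φ d n) (contDiff_φ n) (hcs_φ n)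
      rw [← h]
      refine Finset.sum_congr rfl fun i _ => Finset.sum_congr rfl fun j _ => ?_
      exact congrArg _ (funext fun x => (fderiv_φ n x i j).symm)
    obtain ⟨C, hC⟩ := exists_bound d
    have hlim : Tendsto S atTop (𝓝 (∑ i, ∑ j, if i = j then (D i j) Set.univ else 0)) := by
      apply tendsto_finset_sum
      intro i _
      apply tendsto_finset_sum
      intro j _
      have hpos : Tendsto (fun n => ∫ x, G d n i j x ∂(D i j).toJordanDecomposition.posPart)
          atTop (𝓝 (∫ _x, (if i = j then (1:ℝ) else 0)
            ∂(D i j).toJordanDecomposition.posPart)) := by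
        apply tendsto_integral_of_dominated_convergence (fun _ => C)
        · exact fun n => (continuous_G n i j).aestronglyMeasurable
        · exact integrable_const C
        · exact fun n => ae_of_all _ fun x => by
            rw [Real.norm_eq_abs]; exact hC n i j x
        · exact ae_of_all _ fun x => tendsto_G i j x
      have hneg : Tendsto (fun n => ∫ x, G d n i j x ∂(D i j).toJordanDecomposition.negPart)
          atTop (𝓝 (∫ _x, (if i = j then (1:ℝ) else 0)
            ∂(D i j).toJordanDecomposition.negPart)) := by
        apply tendsto_integral_of_dominated_convergence (fun _ => C)
        · exact fun n => (continuous_G n i j).aestronglyMeasurable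
        · exact integrable_const C
        · exact fun n => ae_of_all _ fun x => by
            rw [Real.norm_eq_abs]; exact hC n i j x
        · exact ae_of_all _ fun x => tendsto_G i j x
      have := hpos.sub hneg
      have heq : (∫ _x, (if i = j then (1:ℝ) else 0) ∂(D i j).toJordanDecomposition.posPart)
          - (∫ _x, (if i = j then (1:ℝ) else 0) ∂(D i j).toJordanDecomposition.negPart)
          = if i = j then (D i j) Set.univ else 0 := by
        rw [integral_const, integral_const, smul_eq_mul, smul_eq_mul]
        by_cases hij : i = j
        · rw [if_pos hij, if_pos hij, mul_one, mul_one,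
            signed_apply_eq (D i j) MeasurableSet.univ]
          rfl
        · rw [if_neg hij, if_neg hij, mul_zero, mul_zero, sub_zero]
      rw [← heq]
      exact this
    have h0 : Tendsto S atTop (𝓝 0) := by
      rw [show S = fun _ => (0:ℝ) from funext hS0]
      exact tendsto_const_nhds
    have hq := tendsto_nhds_unique h0 hlim
    have h5 : ∑ i, ∑ j, (if i = j then (D i j) Set.univ else 0) = ∑ i, (D i i) Set.univ :=
      Finset.sum_congr rfl fun i _ => by simp
    rw [← h5]
    exact hq.symm
  -- Step 2: each diagonal entry has zero total mass, hence vanishes.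
  have hdiaguniv : ∀ i, (D i i) Set.univ = 0 := by
    have := (Finset.sum_eq_zero_iff_of_nonneg
      (fun i _ => hdiagnn i Set.univ MeasurableSet.univ)).mp hsum
    exact fun i => this i (Finset.mem_univ i)
  have hdiag : ∀ i, D i i = 0 := by
    intro i
    apply MeasureTheory.VectorMeasure.ext
    intro s hs
    have h1 : (D i i) (s ∪ sᶜ) = (D i i) s + (D i i) sᶜ :=
      MeasureTheory.VectorMeasure.of_union disjoint_compl_right hs hs.compl
    rw [Set.union_compl_self] at h1
    have h2 := hdiagnn i s hs
    have h3 := hdiagnn i sᶜ hs.compl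
    have h4 := hdiaguniv i
    rw [MeasureTheory.VectorMeasure.zero_apply]
    linarith
  -- Step 3: off-diagonal entries vanish by polarization.
  intro i j
  by_cases hij : i = j
  · subst hij; exact hdiag i
  · apply MeasureTheory.VectorMeasure.ext
    intro s hs
    have h1 := hpsd (Pi.single i 1 + Pi.single j 1) s hs
    have h2 := hpsd (Pi.single i 1 + Pi.single j (-1)) s hs
    rw [sum_pair_collapse d hij 1 (fun k l => (D k l) s) _ rfl] at h1
    rw [sum_pair_collapse d hij (-1) (fun k l => (D k l) s) _ rfl] at h2
    have hii : (D i i) s = 0 := by rw [hdiag i]; rfl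
    have hjj : (D j j) s = 0 := by rw [hdiag j]; rfl
    have hji : (D j i) s = (D i j) s := by rw [hsym j i]
    rw [MeasureTheory.VectorMeasure.zero_apply]
    simp only [hii, hjj, hji] at h1 h2
    linarith
end

section
/- Let E: R^m → [0,∞] be a lower semicontinuous convex function that is strictly convex on its domain of positivity (if 0 < E(y₁) < ∞, E(y₂) < ∞, y₁ ≠ y₂, then E((y₁+y₂)/2) < (E(y₁)+E(y₂))/2), and such that E(y) = 0 for every y in Dom(E) ∩ ∂Dom(E). Let ν be a Borel probability measure on R^m with finite first moment satisfying E(∫ y dν(y)) = ∫ E(y) dν(y) < ∞. Then either (i) ν is the Dirac mass at Y = ∫ y dν(y) and E(Y) > 0, or (ii) ν is supported in the zero set {y : E(y) = 0}. -/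
open MeasureTheory Filter Topology
open scoped ENNReal

set_option maxHeartbeats 1000000

/-- **Sharp form of Jensen's inequality.**  Let `E : ℝ^m → [0,∞]` be lower semicontinuous,
convex, strictly convex on its domain of positivity, and vanishing on
`Dom(E) ∩ ∂Dom(E)`.  If a Borel probability measure `ν` with finite first moment satisfies
`E(∫ y dν) = ∫ E dν < ∞`, then either `ν` is the Dirac mass at the barycenter `Y` with
`E(Y) > 0`, or `ν` is supported in the zero set of `E`. -/
theorem sharp_jensen
    (m : ℕ) (E : EuclideanSpace ℝ (Fin m) → ℝ≥0∞)
    (hconv : ∀ (y z : EuclideanSpace ℝ (Fin m)) (a b : ℝ), 0 ≤ a → 0 ≤ b → a + b = 1 →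
      E (a • y + b • z) ≤ ENNReal.ofReal a * E y + ENNReal.ofReal b * E z)
    (hlsc : LowerSemicontinuous E)
    (hstrict : ∀ y₁ y₂ : EuclideanSpace ℝ (Fin m), 0 < E y₁ → E y₁ ≠ ⊤ → E y₂ ≠ ⊤ →
      y₁ ≠ y₂ → E ((2 : ℝ)⁻¹ • (y₁ + y₂)) < (E y₁ + E y₂) / 2)
    (hbdry : ∀ y ∈ {y | E y ≠ ⊤} ∩ frontier {y | E y ≠ ⊤}, E y = 0)
    (ν : Measure (EuclideanSpace ℝ (Fin m))) [IsProbabilityMeasure ν]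
    (hmom : Integrable (fun y => y) ν)
    (Y : EuclideanSpace ℝ (Fin m)) (hY : Y = ∫ y, y ∂ν)
    (hfin : ∫⁻ y, E y ∂ν ≠ ⊤)
    (heq : E Y = ∫⁻ y, E y ∂ν) :
    (ν = Measure.dirac Y ∧ 0 < E Y) ∨ ν {y | E y ≠ 0} = 0 := by
  have hEmeas : Measurable E := hlsc.measurable
  rcases eq_or_lt_of_le (zero_le : 0 ≤ E Y) with h0 | hpos
  · -- case `E Y = 0`: the lintegral vanishes, so `E = 0` a.e.
    right
    have h1 : ∫⁻ y, E y ∂ν = 0 := by rw [← heq, ← h0]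
    have h2 : ∀ᵐ y ∂ν, E y = 0 := (lintegral_eq_zero_iff hEmeas).mp h1
    simpa [ae_iff] using h2
  · -- case `0 < E Y`: show `ν` is the Dirac mass at `Y`.
    left
    refine ⟨?_, hpos⟩
    set D : Set (EuclideanSpace ℝ (Fin m)) := {y | E y ≠ ⊤} with hDdef
    have hYfin : E Y ≠ ⊤ := heq ▸ hfin
    have hYD : Y ∈ D := hYfin
    -- D is convex
    have hDconv : Convex ℝ D := by
      intro x hx z hz a b ha hb hab
      have h1 := hconv x z a b ha hb hab
      have h2 : ENNReal.ofReal a * E x + ENNReal.ofReal b * E z ≠ ⊤ :=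
        ENNReal.add_ne_top.2 ⟨ENNReal.mul_ne_top ENNReal.ofReal_ne_top hx,
          ENNReal.mul_ne_top ENNReal.ofReal_ne_top hz⟩
      exact ne_top_of_le_ne_top h2 h1
    set f : EuclideanSpace ℝ (Fin m) → ℝ := fun y => (E y).toReal with hfdef
    -- f is convex on D
    have hfconv : ConvexOn ℝ D f := by
      refine ⟨hDconv, fun x hx z hz a b ha hb hab => ?_⟩
      have h1 := hconv x z a b ha hb hab
      have h2 : ENNReal.ofReal a * E x + ENNReal.ofReal b * E z ≠ ⊤ :=
        ENNReal.add_ne_top.2 ⟨ENNReal.mul_ne_top ENNReal.ofReal_ne_top hx,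
          ENNReal.mul_ne_top ENNReal.ofReal_ne_top hz⟩
      have h3 := ENNReal.toReal_mono h2 h1
      rwa [ENNReal.toReal_add (ENNReal.mul_ne_top ENNReal.ofReal_ne_top hx)
          (ENNReal.mul_ne_top ENNReal.ofReal_ne_top hz), ENNReal.toReal_mul,
          ENNReal.toReal_mul, ENNReal.toReal_ofReal ha, ENNReal.toReal_ofReal hb] at h3
    -- Y is in the interior of D
    have hYint : Y ∈ interior D := by
      by_contra hni
      have hfr : Y ∈ frontier D := by
        rw [frontier, Set.mem_diff]
        exact ⟨subset_closure hYD, hni⟩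
      exact absurd (hbdry Y ⟨hYD, hfr⟩) (by simpa using hpos.ne')
    have hcont : ContinuousOn f (interior D) := hfconv.continuousOn_interior
    -- the open strict epigraph over the interior of D
    set S : Set ((EuclideanSpace ℝ (Fin m)) × ℝ) :=
      {p | p.1 ∈ interior D ∧ f p.1 < p.2} with hSdef
    have hSopen : IsOpen S := by
      rw [isOpen_iff_mem_nhds]
      rintro p ⟨hp1, hp2⟩
      have hc1 : ContinuousAt (fun q : (EuclideanSpace ℝ (Fin m)) × ℝ => q.2 - f q.1) p := by
        have : ContinuousAt f p.1 := hcont.continuousAt (isOpen_interior.mem_nhds hp1)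
        exact continuousAt_snd.sub (this.comp continuousAt_fst)
      have h1 : {q : (EuclideanSpace ℝ (Fin m)) × ℝ | 0 < q.2 - f q.1} ∈ 𝓝 p :=
        hc1 (Ioi_mem_nhds (by linarith : (0:ℝ) < p.2 - f p.1))
      have h2 : (interior D) ×ˢ (Set.univ : Set ℝ) ∈ 𝓝 p :=
        prod_mem_nhds (isOpen_interior.mem_nhds hp1) Filter.univ_mem
      filter_upwards [h1, h2] with q hq1 hq2
      have hq1' : 0 < q.2 - f q.1 := hq1
      exact ⟨hq2.1, by linarith⟩
    have hSconv : Convex ℝ S := by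
      rintro p ⟨hp1, hp2⟩ q ⟨hq1, hq2⟩ a b ha hb hab
      refine ⟨hDconv.interior hp1 hq1 ha hb hab, ?_⟩
      have h1 : f (a • p.1 + b • q.1) ≤ a * f p.1 + b * f q.1 :=
        hfconv.2 (interior_subset hp1) (interior_subset hq1) ha hb hab
      have h2 : a * f p.1 + b * f q.1 < a * p.2 + b * q.2 := by
        rcases eq_or_lt_of_le ha with ha0 | ha0
        · have hb1 : b = 1 := by linarith
          simp only [← ha0, hb1, zero_mul, one_mul, zero_add]
          exact hq2
        · exact add_lt_add_of_lt_of_le (mul_lt_mul_of_pos_left hp2 ha0)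
            (mul_le_mul_of_nonneg_left hq2.le hb)
      exact lt_of_le_of_lt h1 h2
    have hYnotS : ((Y, f Y) : (EuclideanSpace ℝ (Fin m)) × ℝ) ∉ S := by
      rintro ⟨-, h⟩; exact lt_irrefl _ h
    obtain ⟨φ, u, hSu, htu⟩ := geometric_hahn_banach_open hSconv hSopen
      (convex_singleton ((Y, f Y) : (EuclideanSpace ℝ (Fin m)) × ℝ))
      (Set.disjoint_singleton_right.mpr hYnotS)
    have huY : u ≤ φ (Y, f Y) := htu _ rfl
    -- decompose φ
    set ψ : EuclideanSpace ℝ (Fin m) → ℝ := fun y => φ (y, 0) with hψdef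
    set r : ℝ := φ (0, 1) with hrdef
    have hφ : ∀ (y : EuclideanSpace ℝ (Fin m)) (t : ℝ), φ (y, t) = ψ y + t * r := by
      intro y t
      have h1 : ((y, t) : (EuclideanSpace ℝ (Fin m)) × ℝ)
          = (y, (0:ℝ)) + t • ((0 : EuclideanSpace ℝ (Fin m)), (1:ℝ)) := by
        simp [Prod.ext_iff]
      rw [h1, map_add, φ.map_smul]
      simp [hψdef, hrdef, smul_eq_mul]
    have hrneg : r < 0 := by
      have h1 : φ (Y, f Y + 1) < u := hSu _ ⟨hYint, lt_add_one (f Y)⟩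
      rw [hφ] at h1
      rw [hφ] at huY
      nlinarith
    -- the affine minorant
    set L : (EuclideanSpace ℝ (Fin m)) →L[ℝ] ℝ :=
      (-r)⁻¹ • (φ.comp (ContinuousLinearMap.inl ℝ (EuclideanSpace ℝ (Fin m)) ℝ)) with hLdef
    have hLval : ∀ y, L y = (-r)⁻¹ * ψ y := by
      intro y
      simp [hLdef, hψdef, ContinuousLinearMap.smul_apply, smul_eq_mul]
    set g : EuclideanSpace ℝ (Fin m) → ℝ := fun y => f Y + L y - L Y with hgdef
    have hgY : g Y = f Y := by simp [hgdef]
    -- subgradient inequality on the interior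
    have hsub_int : ∀ y ∈ interior D, g y ≤ f y := by
      intro y hy
      have hrpos : (0:ℝ) < -r := by linarith
      have key : ψ y + r * f y ≤ ψ Y + r * f Y := by
        have h2 : ∀ ε : ℝ, 0 < ε → ψ y + r * f y ≤ ψ Y + r * f Y + ε := by
          intro ε hε
          have hd : 0 < ε / (-r) := div_pos hε hrpos
          have h3 : φ (y, f y + ε / (-r)) < u := hSu _ ⟨hy, by
            show f y < f y + ε / (-r); linarith⟩
          rw [hφ] at h3
          have h4 : ε / (-r) * r = -ε := by
            have := div_mul_cancel₀ ε hrpos.ne'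
            calc ε / (-r) * r = -(ε / (-r) * (-r)) := by ring
              _ = -ε := by rw [this]
          have huY' := huY; rw [hφ] at huY'
          nlinarith
        by_contra hc
        push_neg at hc
        have := h2 ((ψ y + r * f y - (ψ Y + r * f Y)) / 2) (by linarith)
        linarith
      have h5 : (-r) * g y ≤ (-r) * f y := by
        have hinv : (-r) * (-r)⁻¹ = 1 := mul_inv_cancel₀ hrpos.ne'
        have heq5 : (-r) * g y = (-r) * f Y + ψ y - ψ Y := by
          simp only [hgdef, hLval]
          linear_combination (ψ y - ψ Y) * hinv
        nlinarith
      exact le_of_mul_le_mul_left h5 hrpos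
    -- extend the subgradient inequality to all of D via the midpoint with Y
    have hsub : ∀ y ∈ D, g y ≤ f y := by
      intro y hy
      have hmid : (2:ℝ)⁻¹ • Y + (2:ℝ)⁻¹ • y ∈ interior D :=
        hDconv.combo_interior_closure_mem_interior hYint (subset_closure hy)
          (by norm_num) (by norm_num) (by norm_num)
      have h1 : g ((2:ℝ)⁻¹ • Y + (2:ℝ)⁻¹ • y) ≤ f ((2:ℝ)⁻¹ • Y + (2:ℝ)⁻¹ • y) :=
        hsub_int _ hmid
      have h2 : f ((2:ℝ)⁻¹ • Y + (2:ℝ)⁻¹ • y) ≤ (2:ℝ)⁻¹ * f Y + (2:ℝ)⁻¹ * f y :=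
        hfconv.2 hYD hy (by norm_num) (by norm_num) (by norm_num)
      have h3 : g ((2:ℝ)⁻¹ • Y + (2:ℝ)⁻¹ • y) = (2:ℝ)⁻¹ * g Y + (2:ℝ)⁻¹ * g y := by
        simp only [hgdef, _root_.map_add, _root_.map_smul, smul_eq_mul]
        ring
      rw [hgY] at h3
      have h4 : 2⁻¹ * f Y + 2⁻¹ * g y ≤ 2⁻¹ * f Y + 2⁻¹ * f y := by
        rw [← h3]; exact h1.trans h2
      have h5 : 2⁻¹ * g y ≤ 2⁻¹ * f y := (add_le_add_iff_left _).mp h4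
      exact (mul_le_mul_iff_right₀ (by norm_num : (0:ℝ) < 2⁻¹)).mp h5
    -- integral computations
    have hae_lt : ∀ᵐ y ∂ν, E y < ⊤ := ae_lt_top hEmeas hfin
    have hae_fin : ∀ᵐ y ∂ν, E y ≠ ⊤ := hae_lt.mono fun y h => h.ne
    have hf_int : Integrable f ν :=
      integrable_toReal_of_lintegral_ne_top hEmeas.aemeasurable hfin
    have hint_f : ∫ y, f y ∂ν = f Y := by
      rw [hfdef]
      simp only
      rw [integral_toReal hEmeas.aemeasurable hae_lt, ← heq]
    have hL_int : Integrable (fun y => L y) ν := L.integrable_comp hmom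
    have hint_L : ∫ y, L y ∂ν = L Y := by
      rw [L.integral_comp_comm hmom, ← hY]
    have hg_int : Integrable g ν := by
      have : g = fun y => (f Y - L Y) + L y := by funext y; simp [hgdef]; ring
      rw [this]
      exact (integrable_const _).add hL_int
    have hint_g : ∫ y, g y ∂ν = f Y := by
      have hgeq : g = fun y => (f Y - L Y) + L y := by funext y; simp [hgdef]; ring
      rw [hgeq, integral_add (integrable_const _) hL_int, integral_const, hint_L]
      simp
    have hzero : ∫ y, (f y - g y) ∂ν = 0 := by
      rw [integral_sub hf_int hg_int, hint_f, hint_g, sub_self]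
    have hnn : 0 ≤ᵐ[ν] fun y => f y - g y :=
      hae_fin.mono fun y hy => sub_nonneg.2 (hsub y hy)
    have haeeq : (fun y => f y - g y) =ᵐ[ν] 0 :=
      (integral_eq_zero_iff_of_nonneg_ae hnn (hf_int.sub hg_int)).mp hzero
    -- conclude a.e. equality with Y using strict convexity
    have haeY : ∀ᵐ y ∂ν, y = Y := by
      filter_upwards [haeeq, hae_fin] with y hfg hyfin
      by_contra hne
      have hfgy : f y = g y := by
        have := sub_eq_zero.mp (by simpa using hfg)
        exact this
      have hs := hstrict Y y hpos hYfin hyfin (Ne.symm hne)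
      have hhalf : ((E Y + E y) / 2 : ℝ≥0∞) ≠ ⊤ := by
        apply ne_of_lt
        apply ENNReal.div_lt_top (ENNReal.add_ne_top.2 ⟨hYfin, hyfin⟩) (by norm_num)
      set z : EuclideanSpace ℝ (Fin m) := (2:ℝ)⁻¹ • (Y + y) with hzdef
      have hzD : z ∈ D := ne_top_of_le_ne_top hhalf hs.le
      have hzl : f z < ((E Y + E y)/2 : ℝ≥0∞).toReal :=
        (ENNReal.toReal_lt_toReal hzD hhalf).mpr hs
      have htr : ((E Y + E y)/2 : ℝ≥0∞).toReal = (f Y + f y) / 2 := by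
        rw [ENNReal.toReal_div, ENNReal.toReal_add hYfin hyfin]
        norm_num
        rfl
      have hgz : g z ≤ f z := hsub z hzD
      have hgz' : g z = (g Y + g y) / 2 := by
        have : z = (2:ℝ)⁻¹ • Y + (2:ℝ)⁻¹ • y := by rw [hzdef, smul_add]
        rw [this]
        simp only [hgdef, _root_.map_add, _root_.map_smul, smul_eq_mul]
        ring
      rw [hgz', hgY, ← hfgy] at hgz
      rw [htr] at hzl
      linarith
    -- finish: ν is the Dirac measure at Y
    have hcompl : ν {Y}ᶜ = 0 := by
      have : {Y}ᶜ = {y : EuclideanSpace ℝ (Fin m) | ¬ y = Y} := by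
        ext x; simp
      rw [this, ← ae_iff] at *
      exact haeY
    have hsing : ν {Y} = 1 := by
      have h1 := measure_add_measure_compl (μ := ν) (measurableSet_singleton Y)
      rw [hcompl, add_zero] at h1
      simpa using h1
    refine Measure.ext fun s hs => ?_
    by_cases hmem : Y ∈ s
    · have h1 : (1:ℝ≥0∞) = ν {Y} := hsing.symm
      have h2 : ν {Y} ≤ ν s := measure_mono (Set.singleton_subset_iff.mpr hmem)
      have h3 : ν s ≤ 1 := prob_le_one
      rw [Measure.dirac_apply_of_mem hmem]
      exact le_antisymm h3 (h1 ▸ h2)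
    · have h1 : s ⊆ {Y}ᶜ := fun x hx => by
        simp only [Set.mem_compl_iff, Set.mem_singleton_iff]
        rintro rfl; exact hmem hx
      have h2 : ν s = 0 := measure_mono_null h1 hcompl
      rw [h2, Measure.dirac_apply' Y hs, Set.indicator_of_notMem hmem]
end

section
/- The function E(ρ, m, S) defined on R × R^d × R by E = |m|²/(2ρ) + ρ^γ exp(S/(c_v ρ)) for ρ > 0, E = 0 for ρ = 0, m = 0, S ≤ 0, and E = ∞ otherwise, is a lower semicontinuous function of (ρ, m, S), where γ > 1 and c_v = 1/(γ−1). -/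
open MeasureTheory Filter Topology Classical
open scoped ENNReal

set_option maxHeartbeats 1600000

/-- The total energy `E(ρ, m, S)` of the complete polytropic Euler system, equal to
`|m|²/(2ρ) + ρ^γ exp(S/(c_v ρ))` for `ρ > 0` (with `c_v = 1/(γ−1)`, so `S/(c_v ρ) = S(γ−1)/ρ`),
to `0` for `ρ = 0, m = 0, S ≤ 0`, and to `∞` otherwise, is a lower semicontinuous function
of `(ρ, m, S)`. -/
theorem total_energy_lowerSemicontinuous (d : ℕ) (γ : ℝ) (hγ : 1 < γ) :
    LowerSemicontinuous (fun p : ℝ × EuclideanSpace ℝ (Fin d) × ℝ =>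
      if 0 < p.1 then
        ENNReal.ofReal (‖p.2.1‖ ^ 2 / (2 * p.1) +
          p.1 ^ γ * Real.exp (p.2.2 * (γ - 1) / p.1))
      else if p.1 = 0 ∧ p.2.1 = 0 ∧ p.2.2 ≤ 0 then (0 : ℝ≥0∞) else (⊤ : ℝ≥0∞)) := by
  set f : ℝ × EuclideanSpace ℝ (Fin d) × ℝ → ℝ≥0∞ := fun p =>
      if 0 < p.1 then
        ENNReal.ofReal (‖p.2.1‖ ^ 2 / (2 * p.1) +
          p.1 ^ γ * Real.exp (p.2.2 * (γ - 1) / p.1))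
      else if p.1 = 0 ∧ p.2.1 = 0 ∧ p.2.2 ≤ 0 then (0 : ℝ≥0∞) else (⊤ : ℝ≥0∞) with hf
  set g : ℝ × EuclideanSpace ℝ (Fin d) × ℝ → ℝ := fun p =>
      ‖p.2.1‖ ^ 2 / (2 * p.1) + p.1 ^ γ * Real.exp (p.2.2 * (γ - 1) / p.1) with hg
  intro p y hy
  by_cases h1 : 0 < p.1
  · -- continuity region
    have cg : ContinuousAt g p := by
      have c1 : ContinuousAt (fun q : ℝ × EuclideanSpace ℝ (Fin d) × ℝ => ‖q.2.1‖ ^ 2) p := by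
        fun_prop
      have c2 : ContinuousAt (fun q : ℝ × EuclideanSpace ℝ (Fin d) × ℝ => 2 * q.1) p := by
        fun_prop
      have c3 : ContinuousAt (fun q : ℝ × EuclideanSpace ℝ (Fin d) × ℝ => q.1 ^ γ) p :=
        (Real.continuousAt_rpow_const p.1 γ (Or.inl h1.ne')).comp continuous_fst.continuousAt
      have c4 : ContinuousAt (fun q : ℝ × EuclideanSpace ℝ (Fin d) × ℝ =>
          Real.exp (q.2.2 * (γ - 1) / q.1)) p := by
        apply Real.continuous_exp.continuousAt.comp
        exact ContinuousAt.div (by fun_prop) continuous_fst.continuousAt h1.ne'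
      exact (c1.div c2 (by positivity)).add (c3.mul c4)
    have heq : ∀ᶠ q in 𝓝 p, f q = ENNReal.ofReal (g q) := by
      have : ∀ᶠ q : ℝ × EuclideanSpace ℝ (Fin d) × ℝ in 𝓝 p, 0 < q.1 :=
        (continuous_fst.tendsto p) (Ioi_mem_nhds h1)
      filter_upwards [this] with q hq
      simp only [hf, if_pos hq, hg]
    have hfp : f p = ENNReal.ofReal (g p) := by simp only [hf, if_pos h1, hg]
    have htend : Tendsto (fun q => ENNReal.ofReal (g q)) (𝓝 p) (𝓝 (ENNReal.ofReal (g p))) :=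
      (ENNReal.continuous_ofReal.continuousAt).comp cg
    have hy' : y < ENNReal.ofReal (g p) := hfp ▸ hy
    filter_upwards [heq, htend (Ioi_mem_nhds hy')] with q hq1 hq2
    rw [hq1]; exact hq2
  · by_cases h2 : p.1 = 0
    · by_cases h3 : p.2.1 = 0 ∧ p.2.2 ≤ 0
      · exfalso
        have : f p = 0 := by simp [hf, h1, h2, h3.1, h3.2]
        rw [this] at hy; exact (not_lt_of_ge (zero_le : (0 : ℝ≥0∞) ≤ y)) hy
      · -- f p = ⊤
        have hytop : y < ⊤ := lt_of_lt_of_le hy le_top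
        set r : ℝ := y.toReal with hr
        have hr0 : 0 ≤ r := ENNReal.toReal_nonneg
        have hylt : ∀ b : ℝ, r < b → y < ENNReal.ofReal b := by
          intro b hb
          rw [ENNReal.lt_ofReal_iff_toReal_lt hytop.ne]; exact hb
        by_cases hm : p.2.1 = 0
        · -- then S > 0
          have hS : 0 < p.2.2 := by
            by_contra hS
            exact h3 ⟨hm, le_of_not_gt hS⟩
          set s : ℝ := p.2.2 / 2 with hs
          have hs0 : 0 < s := by positivity
          set c : ℝ := s * (γ - 1) with hc
          have hc0 : 0 < c := by
            apply mul_pos hs0; linarith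
          set n : ℕ := ⌈γ⌉₊ with hn
          have hγn : γ ≤ (n : ℝ) := Nat.le_ceil γ
          set K : ℝ := c ^ (n + 1) / (n + 1).factorial with hK
          have hK0 : 0 < K := by positivity
          set δ : ℝ := min 1 (K / (r + 1)) with hδ
          have hδ0 : 0 < δ := lt_min one_pos (by positivity)
          have ev1 : ∀ᶠ q : ℝ × EuclideanSpace ℝ (Fin d) × ℝ in 𝓝 p, q.1 < δ := by
            have := (continuous_fst.tendsto p) (Iio_mem_nhds (show p.1 < δ by
              rw [h2]; exact hδ0))
            exact this
          have ev2 : ∀ᶠ q : ℝ × EuclideanSpace ℝ (Fin d) × ℝ in 𝓝 p, s < q.2.2 := by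
            have := ((continuous_snd.comp continuous_snd).tendsto p)
              (Ioi_mem_nhds (show s < p.2.2 by rw [hs]; linarith))
            exact this
          filter_upwards [ev1, ev2] with q hq1 hq2
          rcases lt_trichotomy q.1 0 with hq | hq | hq
          · have : f q = ⊤ := by
              simp only [hf]
              rw [if_neg (by linarith), if_neg (by rintro ⟨h', _⟩; linarith)]
            rw [this]; exact hytop
          · have : f q = ⊤ := by
              simp only [hf]
              rw [if_neg (by rw [hq]; exact lt_irrefl 0),
                if_neg (by rintro ⟨_, _, h'⟩; linarith)]
            rw [this]; exact hytop
          · have hfq : f q = ENNReal.ofReal (g q) := by simp only [hf, if_pos hq, hg]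
            rw [hfq]
            apply hylt
            have hq1' : q.1 ≤ 1 := le_of_lt (lt_of_lt_of_le hq1 (min_le_left _ _))
            have hqK : q.1 < K / (r + 1) := lt_of_lt_of_le hq1 (min_le_right _ _)
            -- bound the internal energy term from below
            have step1 : Real.exp (c / q.1) ≤ Real.exp (q.2.2 * (γ - 1) / q.1) := by
              rw [Real.exp_le_exp]
              have hle : c ≤ q.2.2 * (γ - 1) := by nlinarith
              exact (div_le_div_iff_of_pos_right hq).mpr hle
            have step2 : q.1 ^ (n : ℕ) ≤ q.1 ^ γ := by
              rw [← Real.rpow_natCast q.1 n]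
              exact Real.rpow_le_rpow_of_exponent_ge hq hq1' hγn
            have step3 : (c / q.1) ^ (n + 1) / (n + 1).factorial ≤ Real.exp (c / q.1) :=
              Real.pow_div_factorial_le_exp (x := c / q.1) (by positivity) (n + 1)
            have key : K / q.1 ≤ q.1 ^ γ * Real.exp (q.2.2 * (γ - 1) / q.1) := by
              calc K / q.1 = q.1 ^ (n : ℕ) * ((c / q.1) ^ (n + 1) / (n + 1).factorial) := by
                    rw [hK]; field_simp [hq.ne']; rw [div_pow, ← pow_succ']; field_simp
                _ ≤ q.1 ^ (n : ℕ) * Real.exp (c / q.1) :=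
                    mul_le_mul_of_nonneg_left step3 (by positivity)
                _ ≤ q.1 ^ γ * Real.exp (c / q.1) :=
                    mul_le_mul_of_nonneg_right step2 (Real.exp_pos _).le
                _ ≤ q.1 ^ γ * Real.exp (q.2.2 * (γ - 1) / q.1) :=
                    mul_le_mul_of_nonneg_left step1 (by positivity)
            have hKr : r + 1 < K / q.1 := by
              rw [lt_div_iff₀ hq]
              rw [lt_div_iff₀ (by positivity : (0:ℝ) < r + 1)] at hqK
              nlinarith [hqK]
            have hA : 0 ≤ ‖q.2.1‖ ^ 2 / (2 * q.1) := by positivity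
            have : r + 1 ≤ g q := by
              simp only [hg]
              nlinarith [key, hKr, hA]
            linarith
        · -- m ≠ 0
          have hnorm : 0 < ‖p.2.1‖ := norm_pos_iff.mpr hm
          set c' : ℝ := ‖p.2.1‖ ^ 2 / 4 with hc'
          have hc'0 : 0 < c' := by positivity
          set δ : ℝ := c' / (2 * (r + 1)) with hδ
          have hδ0 : 0 < δ := by positivity
          have ev1 : ∀ᶠ q : ℝ × EuclideanSpace ℝ (Fin d) × ℝ in 𝓝 p, q.1 < δ := by
            exact (continuous_fst.tendsto p) (Iio_mem_nhds (show p.1 < δ by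
              rw [h2]; exact hδ0))
          have ev2 : ∀ᶠ q : ℝ × EuclideanSpace ℝ (Fin d) × ℝ in 𝓝 p,
              ‖p.2.1‖ / 2 < ‖q.2.1‖ := by
            have hcont : Continuous (fun q : ℝ × EuclideanSpace ℝ (Fin d) × ℝ => ‖q.2.1‖) := by
              fun_prop
            exact (hcont.tendsto p) (Ioi_mem_nhds (by linarith))
          filter_upwards [ev1, ev2] with q hq1 hq2
          have hq2' : c' < ‖q.2.1‖ ^ 2 := by
            rw [hc']
            have h0 : 0 ≤ ‖p.2.1‖ / 2 := by positivity
            nlinarith [hq2, h0]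
          rcases lt_trichotomy q.1 0 with hq | hq | hq
          · have : f q = ⊤ := by
              simp only [hf]
              rw [if_neg (by linarith), if_neg (by rintro ⟨h', _⟩; linarith)]
            rw [this]; exact hytop
          · have hqm : q.2.1 ≠ 0 := by
              intro h'
              rw [h', norm_zero] at hq2
              linarith
            have : f q = ⊤ := by
              simp only [hf]
              rw [if_neg (by rw [hq]; exact lt_irrefl 0),
                if_neg (by rintro ⟨_, h', _⟩; exact hqm h')]
            rw [this]; exact hytop
          · have hfq : f q = ENNReal.ofReal (g q) := by simp only [hf, if_pos hq, hg]
            rw [hfq]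
            apply hylt
            have hA : r + 1 < ‖q.2.1‖ ^ 2 / (2 * q.1) := by
              rw [lt_div_iff₀ (by positivity)]
              rw [hδ, lt_div_iff₀ (by positivity)] at hq1
              nlinarith [hq1, hq2']
            have hB : 0 < q.1 ^ γ * Real.exp (q.2.2 * (γ - 1) / q.1) := by positivity
            simp only [hg]
            linarith
    · -- ρ < 0
      have hρ : p.1 < 0 := lt_of_le_of_ne (le_of_not_gt h1) h2
      have hytop : y < ⊤ := lt_of_lt_of_le hy le_top
      have ev : ∀ᶠ q : ℝ × EuclideanSpace ℝ (Fin d) × ℝ in 𝓝 p, q.1 < 0 :=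
        (continuous_fst.tendsto p) (Iio_mem_nhds hρ)
      filter_upwards [ev] with q hq
      have : f q = ⊤ := by
        simp only [hf]
        rw [if_neg (by linarith), if_neg (by rintro ⟨h', _⟩; linarith)]
      rw [this]; exact hytop
end

section
/- Let P(ρ) = (a/(γ−1)) ρ^γ with a > 0, γ > 1, and let ρ_∞ > 0. Then the relative internal energy ρ ↦ P(ρ) − P'(ρ_∞)(ρ − ρ_∞) − P(ρ_∞) is non-negative for ρ ≥ 0, vanishes only at ρ = ρ_∞, and satisfies: it is bounded below by a positive constant times (ρ − ρ_∞)² for ρ in the interval [ρ_∞/2, 2ρ_∞], and bounded below by a positive constant times (1 + ρ^γ) for ρ outside that interval. -/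
open MeasureTheory Filter Topology
open scoped ENNReal

/-- The relative internal energy (Bregman divergence of the pressure potential). -/
noncomputable def Grel (a γ ρi : ℝ) : ℝ → ℝ :=
  fun ρ => a / (γ - 1) * ρ ^ γ - (a * γ / (γ - 1) * ρi ^ (γ - 1)) * (ρ - ρi) - a / (γ - 1) * ρi ^ γ

theorem Grel_hasDerivAt {a γ : ℝ} (ρi : ℝ) (hγ : 1 < γ) (x : ℝ) :
    HasDerivAt (Grel a γ ρi) (a * γ / (γ - 1) * (x ^ (γ - 1) - ρi ^ (γ - 1))) x := by
  have hne : γ - 1 ≠ 0 := by linarith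
  have h1 : HasDerivAt (fun ρ : ℝ => ρ ^ γ) (γ * x ^ (γ - 1)) x :=
    Real.hasDerivAt_rpow_const (Or.inr hγ.le)
  have h := ((h1.const_mul (a / (γ - 1))).sub
    (((hasDerivAt_id x).sub_const ρi).const_mul (a * γ / (γ - 1) * ρi ^ (γ - 1)))).sub_const
    (a / (γ - 1) * ρi ^ γ)
  refine h.congr_deriv ?_
  ring

theorem Grel_rhoi (a γ ρi : ℝ) : Grel a γ ρi ρi = 0 := by
  simp [Grel]

theorem Grel_anti {a γ ρi : ℝ} (ha : 0 < a) (hγ : 1 < γ) (hρi : 0 < ρi) :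
    StrictAntiOn (Grel a γ ρi) (Set.Icc 0 ρi) := by
  have hpos : 0 < a * γ / (γ - 1) :=
    div_pos (mul_pos ha (by linarith)) (by linarith)
  refine strictAntiOn_of_hasDerivWithinAt_neg (convex_Icc _ _)
    (fun x _ => (Grel_hasDerivAt ρi hγ x).continuousAt.continuousWithinAt)
    (fun x _ => (Grel_hasDerivAt ρi hγ x).hasDerivWithinAt) ?_
  intro x hx
  rw [interior_Icc] at hx
  have : x ^ (γ - 1) < ρi ^ (γ - 1) := Real.rpow_lt_rpow hx.1.le hx.2 (by linarith)
  exact mul_neg_of_pos_of_neg hpos (by linarith)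

theorem Grel_mono {a γ ρi : ℝ} (ha : 0 < a) (hγ : 1 < γ) (hρi : 0 < ρi) :
    StrictMonoOn (Grel a γ ρi) (Set.Ici ρi) := by
  have hpos : 0 < a * γ / (γ - 1) :=
    div_pos (mul_pos ha (by linarith)) (by linarith)
  refine strictMonoOn_of_hasDerivWithinAt_pos (convex_Ici _)
    (fun x _ => (Grel_hasDerivAt ρi hγ x).continuousAt.continuousWithinAt)
    (fun x _ => (Grel_hasDerivAt ρi hγ x).hasDerivWithinAt) ?_
  intro x hx
  rw [interior_Ici] at hx
  have : ρi ^ (γ - 1) < x ^ (γ - 1) := Real.rpow_lt_rpow hρi.le hx (by linarith)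
  exact mul_pos hpos (by linarith)

theorem Grel_pos {a γ ρi : ℝ} (ha : 0 < a) (hγ : 1 < γ) (hρi : 0 < ρi)
    {ρ : ℝ} (hρ : 0 ≤ ρ) (hne : ρ ≠ ρi) : 0 < Grel a γ ρi ρ := by
  rcases lt_or_gt_of_ne hne with h | h
  · have := Grel_anti ha hγ hρi ⟨hρ, h.le⟩ ⟨hρi.le, le_refl _⟩ h
    rw [Grel_rhoi] at this; exact this
  · have := Grel_mono ha hγ hρi (Set.self_mem_Ici) (le_of_lt h) h
    rw [Grel_rhoi] at this; exact this

theorem Grel_quad {a γ ρi : ℝ} (ha : 0 < a) (hγ : 1 < γ) (hρi : 0 < ρi) :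
    ∃ c > 0, ∀ ρ ∈ Set.Icc (ρi / 2) (2 * ρi), c * (ρ - ρi) ^ 2 ≤ Grel a γ ρi ρ := by
  have hγ0 : 0 < γ := by linarith
  have hne : γ - 1 ≠ 0 := by linarith
  set m : ℝ := min ((ρi / 2) ^ (γ - 2)) ((2 * ρi) ^ (γ - 2)) with hm_def
  have hm : 0 < m := lt_min (Real.rpow_pos_of_pos (by linarith) _)
    (Real.rpow_pos_of_pos (by linarith) _)
  refine ⟨a * γ * m / 2, by positivity, ?_⟩
  set c : ℝ := a * γ * m / 2 with hc_def
  have hc : 0 < c := by positivity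
  -- the derivative of Grel minus the quadratic
  set u : ℝ → ℝ := fun x => a * γ / (γ - 1) * (x ^ (γ - 1) - ρi ^ (γ - 1)) - 2 * c * (x - ρi)
    with hu_def
  have hu : ∀ x : ℝ, 0 < x → HasDerivAt u (a * γ * x ^ (γ - 2) - 2 * c) x := by
    intro x hx
    have h1 : HasDerivAt (fun y : ℝ => y ^ (γ - 1)) ((γ - 1) * x ^ (γ - 1 - 1)) x :=
      Real.hasDerivAt_rpow_const (Or.inl hx.ne')
    have h2 : γ - 1 - 1 = γ - 2 := by ring
    rw [h2] at h1
    have h := ((h1.sub_const (ρi ^ (γ - 1))).const_mul (a * γ / (γ - 1))).sub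
      (((hasDerivAt_id x).sub_const ρi).const_mul (2 * c))
    refine h.congr_deriv ?_
    field_simp
  have humono : MonotoneOn u (Set.Icc (ρi / 2) (2 * ρi)) := by
    refine monotoneOn_of_hasDerivWithinAt_nonneg (convex_Icc _ _)
      (fun x hx => (hu x (by cases hx with | intro h1 h2 => linarith)).continuousAt.continuousWithinAt)
      (fun x hx => (hu x (by rw [interior_Icc] at hx; cases hx with | intro h1 h2 => linarith)).hasDerivWithinAt) ?_
    intro x hx
    rw [interior_Icc] at hx
    have hxpos : 0 < x := by cases hx with | intro h1 h2 => linarith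
    have hmx : m ≤ x ^ (γ - 2) := by
      rcases le_or_gt 2 γ with h | h
      · exact le_trans (min_le_left _ _)
          (Real.rpow_le_rpow (by linarith) hx.1.le (by linarith))
      · exact le_trans (min_le_right _ _)
          (Real.rpow_le_rpow_of_nonpos hxpos hx.2.le (by linarith))
    have : a * γ * m ≤ a * γ * x ^ (γ - 2) :=
      mul_le_mul_of_nonneg_left hmx (by positivity)
    have h2c : 2 * c = a * γ * m := by rw [hc_def]; ring
    linarith
  have hu_rhoi : u ρi = 0 := by simp [hu_def]
  -- ψ = Grel - quadratic
  set ψ : ℝ → ℝ := fun x => Grel a γ ρi x - c * (x - ρi) ^ 2 with hψ_def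
  have hψd : ∀ x : ℝ, HasDerivAt ψ (u x) x := by
    intro x
    have h := (Grel_hasDerivAt (a := a) ρi hγ x).sub
      ((((hasDerivAt_id x).sub_const ρi).pow 2).const_mul c)
    refine h.congr_deriv ?_
    simp [hu_def]
    ring
  have hanti : AntitoneOn ψ (Set.Icc (ρi / 2) ρi) := by
    refine antitoneOn_of_hasDerivWithinAt_nonpos (convex_Icc _ _)
      (fun x _ => (hψd x).continuousAt.continuousWithinAt)
      (fun x _ => (hψd x).hasDerivWithinAt) ?_
    intro x hx
    rw [interior_Icc] at hx
    have := humono (Set.mem_Icc.2 ⟨hx.1.le, by linarith [hx.2]⟩)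
      (Set.mem_Icc.2 ⟨by linarith, by linarith⟩) hx.2.le
    rw [hu_rhoi] at this
    exact this
  have hmono : MonotoneOn ψ (Set.Icc ρi (2 * ρi)) := by
    refine monotoneOn_of_hasDerivWithinAt_nonneg (convex_Icc _ _)
      (fun x _ => (hψd x).continuousAt.continuousWithinAt)
      (fun x _ => (hψd x).hasDerivWithinAt) ?_
    intro x hx
    rw [interior_Icc] at hx
    have := humono (Set.mem_Icc.2 ⟨by linarith, by linarith⟩)
      (Set.mem_Icc.2 ⟨by linarith [hx.1], hx.2.le⟩) hx.1.le
    rw [hu_rhoi] at this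
    exact this
  have hψ_rhoi : ψ ρi = 0 := by simp [hψ_def, Grel_rhoi]
  intro ρ hρ
  rcases le_total ρ ρi with h | h
  · have := hanti (Set.mem_Icc.2 ⟨hρ.1, h⟩) (Set.mem_Icc.2 ⟨by linarith, le_refl _⟩) h
    rw [hψ_rhoi] at this
    simp only [hψ_def] at this
    linarith
  · have := hmono (Set.mem_Icc.2 ⟨le_refl _, by linarith⟩) (Set.mem_Icc.2 ⟨h, hρ.2⟩) h
    rw [hψ_rhoi] at this
    simp only [hψ_def] at this
    linarith

theorem Grel_coerc {a γ ρi : ℝ} (ha : 0 < a) (hγ : 1 < γ) (hρi : 0 < ρi) :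
    ∃ c > 0, ∀ ρ : ℝ, 0 ≤ ρ → ρ ∉ Set.Icc (ρi / 2) (2 * ρi) →
      c * (1 + ρ ^ γ) ≤ Grel a γ ρi ρ := by
  have hγ0 : 0 < γ := by linarith
  have hne1 : γ - 1 ≠ 0 := by linarith
  set δA : ℝ := Grel a γ ρi (ρi / 2) with hδA_def
  have hδA : 0 < δA := Grel_pos ha hγ hρi (by linarith) (by intro h; linarith)
  set δB : ℝ := Grel a γ ρi (2 * ρi) with hδB_def
  have hδB : 0 < δB := Grel_pos ha hγ hρi (by linarith) (by intro h; nlinarith)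
  set R : ℝ := max (max (2 * ρi) 1) (ρi * (2 * γ) ^ (γ - 1)⁻¹) with hR_def
  have hR1 : (1 : ℝ) ≤ R := le_trans (le_max_right _ _) (le_max_left _ _)
  have hR2 : 2 * ρi ≤ R := le_trans (le_max_left _ _) (le_max_left _ _)
  have hR3 : ρi * (2 * γ) ^ (γ - 1)⁻¹ ≤ R := le_max_right _ _
  have hDA : (0:ℝ) < 1 + (ρi / 2) ^ γ := by positivity
  have hDB : (0:ℝ) < 1 + R ^ γ := by positivity
  set cA : ℝ := δA / (1 + (ρi / 2) ^ γ) with hcA_def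
  set cB : ℝ := δB / (1 + R ^ γ) with hcB_def
  set cC : ℝ := a / (γ - 1) / 4 with hcC_def
  have hcA : 0 < cA := div_pos hδA hDA
  have hcB : 0 < cB := div_pos hδB hDB
  have hK : 0 < a / (γ - 1) := div_pos ha (by linarith)
  have hcC : 0 < cC := by rw [hcC_def]; positivity
  refine ⟨min cA (min cB cC), lt_min hcA (lt_min hcB hcC), ?_⟩
  intro ρ hρ hout
  have hleA : min cA (min cB cC) ≤ cA := min_le_left _ _
  have hleB : min cA (min cB cC) ≤ cB := le_trans (min_le_right _ _) (min_le_left _ _)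
  have hleC : min cA (min cB cC) ≤ cC := le_trans (min_le_right _ _) (min_le_right _ _)
  have hρpow : (0:ℝ) ≤ ρ ^ γ := Real.rpow_nonneg hρ γ
  rw [Set.mem_Icc, not_and_or] at hout
  push_neg at hout
  rcases hout with h | h
  · -- ρ < ρi / 2
    have hG : δA < Grel a γ ρi ρ :=
      Grel_anti ha hγ hρi ⟨hρ, by linarith⟩ ⟨by linarith, by linarith⟩ h
    have hpow : ρ ^ γ ≤ (ρi / 2) ^ γ := Real.rpow_le_rpow hρ h.le hγ0.le
    calc min cA (min cB cC) * (1 + ρ ^ γ)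
        ≤ cA * (1 + (ρi / 2) ^ γ) :=
          mul_le_mul hleA (by linarith) (by linarith) hcA.le
      _ = δA := by rw [hcA_def, div_mul_cancel₀ _ hDA.ne']
      _ ≤ Grel a γ ρi ρ := hG.le
  · -- 2 * ρi < ρ
    rcases le_or_gt ρ R with hρR | hρR
    · have hG : δB < Grel a γ ρi ρ :=
        Grel_mono ha hγ hρi (by simp [Set.mem_Ici]; linarith) (by simp [Set.mem_Ici]; linarith) h
      have hpow : ρ ^ γ ≤ R ^ γ := Real.rpow_le_rpow hρ hρR hγ0.le
      calc min cA (min cB cC) * (1 + ρ ^ γ)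
          ≤ cB * (1 + R ^ γ) :=
            mul_le_mul hleB (by linarith) (by linarith) hcB.le
        _ = δB := by rw [hcB_def, div_mul_cancel₀ _ hDB.ne']
        _ ≤ Grel a γ ρi ρ := hG.le
    · -- R < ρ : the genuinely coercive regime
      have hρ1 : (1:ℝ) ≤ ρ := by linarith
      have hρpos : (0:ℝ) < ρ := by linarith
      have hpow1 : (1:ℝ) ≤ ρ ^ γ := Real.one_le_rpow hρ1 hγ0.le
      have hbase : (0:ℝ) ≤ ρi * (2 * γ) ^ (γ - 1)⁻¹ := by positivity
      have h1 : (ρi * (2 * γ) ^ (γ - 1)⁻¹) ^ (γ - 1) ≤ ρ ^ (γ - 1) :=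
        Real.rpow_le_rpow hbase (by linarith) (by linarith)
      have h2 : (ρi * (2 * γ) ^ (γ - 1)⁻¹) ^ (γ - 1) = ρi ^ (γ - 1) * (2 * γ) := by
        rw [Real.mul_rpow hρi.le (by positivity),
          ← Real.rpow_mul (by linarith : (0:ℝ) ≤ 2 * γ), inv_mul_cancel₀ hne1, Real.rpow_one]
      rw [h2] at h1
      have h3 : ρ ^ γ = ρ ^ (γ - 1) * ρ := by
        rw [← Real.rpow_add_one hρpos.ne' (γ - 1)]; ring_nf
      have hkey : γ * ρi ^ (γ - 1) * ρ ≤ ρ ^ γ / 2 := by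
        rw [h3]; nlinarith [Real.rpow_nonneg hρi.le (γ - 1)]
      have h4 : ρi ^ (γ - 1) * ρi = ρi ^ γ := by
        rw [← Real.rpow_add_one hρi.ne' (γ - 1)]; ring_nf
      have hGrel : Grel a γ ρi ρ
          = a / (γ - 1) * (ρ ^ γ - γ * ρi ^ (γ - 1) * (ρ - ρi) - ρi ^ γ) := by
        simp only [Grel]; field_simp
      have h5 : γ * (ρi ^ (γ - 1) * ρi) = γ * ρi ^ γ := by rw [h4]
      have h6 : 0 ≤ (γ - 1) * ρi ^ γ :=
        mul_nonneg (by linarith) (Real.rpow_nonneg hρi.le γ)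
      have hinner : (1 + ρ ^ γ) / 4 ≤ ρ ^ γ - γ * ρi ^ (γ - 1) * (ρ - ρi) - ρi ^ γ := by
        linarith [hkey, hpow1, h5, h6]
      calc min cA (min cB cC) * (1 + ρ ^ γ)
          ≤ cC * (1 + ρ ^ γ) := mul_le_mul_of_nonneg_right hleC (by linarith)
        _ = a / (γ - 1) * ((1 + ρ ^ γ) / 4) := by rw [hcC_def]; ring
        _ ≤ Grel a γ ρi ρ := by
            rw [hGrel]; exact mul_le_mul_of_nonneg_left hinner hK.le

/-- Coercivity of the relative internal energy (Bregman divergence of the pressure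
potential `P(ρ) = (a/(γ−1)) ρ^γ` at `ρ_∞ > 0`): it is non-negative for `ρ ≥ 0`, vanishes
only at `ρ = ρ_∞`, dominates a positive multiple of `(ρ − ρ_∞)²` on `[ρ_∞/2, 2ρ_∞]`, and
dominates a positive multiple of `1 + ρ^γ` outside that interval. -/
theorem relative_internal_energy_coercive (a γ ρi : ℝ) (ha : 0 < a) (hγ : 1 < γ)
    (hρi : 0 < ρi) :
    let P : ℝ → ℝ := fun ρ => a / (γ - 1) * ρ ^ γ
    let F : ℝ → ℝ := fun ρ => P ρ - (a * γ / (γ - 1) * ρi ^ (γ - 1)) * (ρ - ρi) - P ρi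
    (∀ ρ : ℝ, 0 ≤ ρ → 0 ≤ F ρ) ∧
    (∀ ρ : ℝ, 0 ≤ ρ → (F ρ = 0 ↔ ρ = ρi)) ∧
    (∃ c > 0, ∀ ρ ∈ Set.Icc (ρi / 2) (2 * ρi), c * (ρ - ρi) ^ 2 ≤ F ρ) ∧
    (∃ c > 0, ∀ ρ : ℝ, 0 ≤ ρ → ρ ∉ Set.Icc (ρi / 2) (2 * ρi) → c * (1 + ρ ^ γ) ≤ F ρ) := by
  intro P F
  have hF : ∀ ρ : ℝ, F ρ = Grel a γ ρi ρ := fun ρ => rfl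
  refine ⟨?_, ?_, ?_, ?_⟩
  · intro ρ hρ
    rw [hF]
    rcases eq_or_ne ρ ρi with h | h
    · rw [h, Grel_rhoi]
    · exact (Grel_pos ha hγ hρi hρ h).le
  · intro ρ hρ
    rw [hF]
    constructor
    · intro h0
      by_contra h
      exact (Grel_pos ha hγ hρi hρ h).ne' h0
    · intro h; rw [h, Grel_rhoi]
  · obtain ⟨c, hc, hq⟩ := Grel_quad ha hγ hρi
    exact ⟨c, hc, fun ρ hρ => (hF ρ) ▸ hq ρ hρ⟩
  · obtain ⟨c, hc, hq⟩ := Grel_coerc ha hγ hρi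
    exact ⟨c, hc, fun ρ hρ hout => (hF ρ) ▸ hq ρ hρ hout⟩
end

section
/- Let (ρ_n, m_n) be sequences of measurable functions on (0,T) × B, B a bounded ball in R^d, with ρ_n ≥ 0, such that ρ_n → ρ strongly in L^γ((0,T)×B), h_n := m_n/√ρ_n (set to 0 where ρ_n = 0) converges weakly in L²((0,T)×B; R^d) to some h, and m_n → m weakly in L^{2γ/(γ+1)}((0,T)×B; R^d). Then m = √ρ · h almost everywhere. -/
open MeasureTheory Filter Topology
open scoped ENNReal RealInnerProductSpace

private lemma sqrt_sub_sq_le {a b : ℝ} (ha : 0 ≤ a) (hb : 0 ≤ b) :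
    (Real.sqrt a - Real.sqrt b) ^ 2 ≤ |a - b| := by
  rcases le_total b a with hab | hab
  · rw [abs_of_nonneg (by linarith)]
    nlinarith [Real.sq_sqrt ha, Real.sq_sqrt hb, Real.sqrt_nonneg a, Real.sqrt_nonneg b,
      Real.sqrt_le_sqrt hab]
  · rw [abs_of_nonpos (by linarith)]
    nlinarith [Real.sq_sqrt ha, Real.sq_sqrt hb, Real.sqrt_nonneg a, Real.sqrt_nonneg b,
      Real.sqrt_le_sqrt hab]

private lemma enorm_sqrt_sub_sq_le {a b : ℝ} (ha : 0 ≤ a) (hb : 0 ≤ b) :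
    ((‖Real.sqrt a - Real.sqrt b‖₊ : ℝ≥0∞)) ^ (2 : ℝ) ≤ (‖a - b‖₊ : ℝ≥0∞) := by
  rw [show (2:ℝ) = ((2:ℕ):ℝ) by norm_num, ENNReal.rpow_natCast, ← ENNReal.coe_pow,
    ENNReal.coe_le_coe, ← NNReal.coe_le_coe]
  push_cast
  rw [Real.norm_eq_abs, Real.norm_eq_abs, sq_abs]
  exact sqrt_sub_sq_le ha hb

private lemma eLpNorm_sqrt_sub_le {X : Type*} [MeasurableSpace X] {μ : Measure X}
    {f g : X → ℝ} (hf : ∀ x, 0 ≤ f x) (hg : ∀ x, 0 ≤ g x) :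
    eLpNorm (fun x => Real.sqrt (f x) - Real.sqrt (g x)) 2 μ ≤
      (eLpNorm (fun x => f x - g x) 1 μ) ^ (1/2 : ℝ) := by
  rw [eLpNorm_eq_lintegral_rpow_enorm_toReal (by norm_num) (by norm_num),
    eLpNorm_one_eq_lintegral_enorm]
  simp only [ENNReal.toReal_ofNat]
  exact ENNReal.rpow_le_rpow
    (lintegral_mono fun x => enorm_sqrt_sub_sq_le (hf x) (hg x)) (by norm_num)

private lemma memℒp_sqrt {X : Type*} [MeasurableSpace X] {μ : Measure X}
    {f : X → ℝ} (hf : MemLp f 1 μ) (h0 : ∀ x, 0 ≤ f x) :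
    MemLp (fun x => Real.sqrt (f x)) 2 μ := by
  refine ⟨Real.continuous_sqrt.comp_aestronglyMeasurable hf.1, ?_⟩
  have h := eLpNorm_sqrt_sub_le (μ := μ) (g := fun _ => (0:ℝ)) h0 (fun _ => le_rfl)
  simp only [Real.sqrt_zero, sub_zero] at h
  exact lt_of_le_of_lt h (ENNReal.rpow_lt_top_of_nonneg (by norm_num) hf.2.ne)

/-- If `ρ_n → ρ` strongly in `L^γ`, `h_n := m_n/√ρ_n` (set to `0` on the vacuum
`{ρ_n = 0}`, where also `m_n = 0`) converges weakly in `L²` to `h`, and `m_n → m` weakly in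
`L^{2γ/(γ+1)}`, then `m = √ρ · h` almost everywhere. -/
theorem weak_limit_momentum_eq_sqrt_density_mul
    {X : Type*} [MeasurableSpace X] (μ : Measure X) [IsFiniteMeasure μ]
    (d : ℕ) (γ : ℝ) (hγ : 1 < γ)
    (ρn : ℕ → X → ℝ) (mn hn : ℕ → X → EuclideanSpace ℝ (Fin d))
    (ρ : X → ℝ) (m h : X → EuclideanSpace ℝ (Fin d))
    (hρnonneg : ∀ n x, 0 ≤ ρn n x) (hρposlim : ∀ x, 0 ≤ ρ x)
    (hdef : ∀ n x, hn n x = if ρn n x = 0 then 0 else (Real.sqrt (ρn n x))⁻¹ • mn n x)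
    (hvac : ∀ n, ∀ᵐ x ∂μ, ρn n x = 0 → mn n x = 0)
    (hmemρn : ∀ n, MemLp (ρn n) (ENNReal.ofReal γ) μ)
    (hmemρ : MemLp ρ (ENNReal.ofReal γ) μ)
    (hmemhn : ∀ n, MemLp (hn n) 2 μ) (hmemh : MemLp h 2 μ)
    (hmemmn : ∀ n, MemLp (mn n) (ENNReal.ofReal (2 * γ / (γ + 1))) μ)
    (hmemm : MemLp m (ENNReal.ofReal (2 * γ / (γ + 1))) μ)
    (hstrong : Tendsto (fun n => eLpNorm (ρn n - ρ) (ENNReal.ofReal γ) μ) atTop (nhds 0))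
    (hweakL2 : ∀ g : X → EuclideanSpace ℝ (Fin d), MemLp g 2 μ →
      Tendsto (fun n => ∫ x, ⟪g x, hn n x⟫ ∂μ) atTop (nhds (∫ x, ⟪g x, h x⟫ ∂μ)))
    (hweakm : ∀ g : X → EuclideanSpace ℝ (Fin d),
      MemLp g (ENNReal.ofReal (2 * γ / (γ - 1))) μ →
      Tendsto (fun n => ∫ x, ⟪g x, mn n x⟫ ∂μ) atTop (nhds (∫ x, ⟪g x, m x⟫ ∂μ))) :
    ∀ᵐ x ∂μ, m x = Real.sqrt (ρ x) • h x := by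
  have hγ1 : (1 : ℝ≥0∞) ≤ ENNReal.ofReal γ := ENNReal.one_le_ofReal.mpr hγ.le
  -- a.e. identity mₙ = √ρₙ • hₙ
  have hmn_eq : ∀ n, mn n =ᵐ[μ] fun x => Real.sqrt (ρn n x) • hn n x := by
    intro n
    filter_upwards [hvac n] with x hx
    by_cases h0 : ρn n x = 0
    · simp [hx h0, h0]
    · rw [hdef n x, if_neg h0, smul_smul,
        mul_inv_cancel₀ (Real.sqrt_ne_zero'.mpr ((hρnonneg n x).lt_of_ne (Ne.symm h0))),
        one_smul]
  -- basic Memℒp facts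
  have hρn1 : ∀ n, MemLp (ρn n) 1 μ := fun n => (hmemρn n).mono_exponent hγ1
  have hρ1 : MemLp ρ 1 μ := hmemρ.mono_exponent hγ1
  have hsρn : ∀ n, MemLp (fun x => Real.sqrt (ρn n x)) 2 μ :=
    fun n => memℒp_sqrt (hρn1 n) (hρnonneg n)
  have hsρ : MemLp (fun x => Real.sqrt (ρ x)) 2 μ := memℒp_sqrt hρ1 hρposlim
  -- L¹ convergence of ρₙ, and L² convergence of √ρₙ
  have h1conv : Tendsto (fun n => eLpNorm (ρn n - ρ) 1 μ) atTop (nhds 0) := by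
    set C : ℝ≥0∞ := μ Set.univ ^ (1 / (1 : ℝ≥0∞).toReal - 1 / (ENNReal.ofReal γ).toReal) with hC
    have hCne : C ≠ ∞ := by
      apply (ENNReal.rpow_lt_top_of_nonneg ?_ (measure_ne_top μ _)).ne
      rw [ENNReal.toReal_one, ENNReal.toReal_ofReal (by linarith)]
      have : 1 / γ ≤ 1 := by
        rw [div_le_one (by linarith)]; linarith
      linarith
    have hb : ∀ n, eLpNorm (ρn n - ρ) 1 μ ≤ eLpNorm (ρn n - ρ) (ENNReal.ofReal γ) μ * C :=
      fun n => eLpNorm_le_eLpNorm_mul_rpow_measure_univ hγ1 ((hρn1 n).1.sub hρ1.1)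
    have hlim : Tendsto (fun n => eLpNorm (ρn n - ρ) (ENNReal.ofReal γ) μ * C) atTop (nhds 0) := by
      have := ENNReal.Tendsto.mul_const hstrong (Or.inr hCne)
      rwa [zero_mul] at this
    exact tendsto_of_tendsto_of_tendsto_of_le_of_le tendsto_const_nhds hlim
      (fun n => zero_le) hb
  have hsconv : Tendsto
      (fun n => eLpNorm (fun x => Real.sqrt (ρn n x) - Real.sqrt (ρ x)) 2 μ) atTop (nhds 0) := by
    have hrp : Tendsto (fun n => (eLpNorm (ρn n - ρ) 1 μ) ^ (1/2 : ℝ)) atTop (nhds 0) := by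
      have := (ENNReal.continuous_rpow_const (y := (1/2 : ℝ))).tendsto 0
      have h2 := this.comp h1conv
      rwa [show (0 : ℝ≥0∞) ^ (1/2 : ℝ) = 0 from ENNReal.zero_rpow_of_pos (by norm_num)] at h2
    refine tendsto_of_tendsto_of_tendsto_of_le_of_le tendsto_const_nhds hrp
      (fun n => zero_le) (fun n => ?_)
    exact eLpNorm_sqrt_sub_le (hρnonneg n) hρposlim
  -- uniform L² bound on hₙ via Banach–Steinhaus
  obtain ⟨C₀, hC₀⟩ : ∃ C₀ : ℝ, ∀ n, (eLpNorm (hn n) 2 μ).toReal ≤ C₀ := by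
    have F : ℕ → Lp (EuclideanSpace ℝ (Fin d)) 2 μ := fun n => (hmemhn n).toLp (hn n)
    set T : ℕ → Lp (EuclideanSpace ℝ (Fin d)) 2 μ →L[ℝ] ℝ :=
      fun n => innerSL ℝ ((hmemhn n).toLp (hn n)) with hT
    have hTval : ∀ n (g : Lp (EuclideanSpace ℝ (Fin d)) 2 μ),
        T n g = ∫ x, ⟪g x, hn n x⟫ ∂μ := by
      intro n g
      have h1 : T n g = ∫ x, ⟪((hmemhn n).toLp (hn n)) x, g x⟫ ∂μ :=
        L2.inner_def ((hmemhn n).toLp (hn n)) g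
      rw [h1]
      refine integral_congr_ae ?_
      filter_upwards [(hmemhn n).coeFn_toLp] with x hx
      rw [hx, real_inner_comm]
    have hpt : ∀ g : Lp (EuclideanSpace ℝ (Fin d)) 2 μ, ∃ C, ∀ n, ‖T n g‖ ≤ C := by
      intro g
      obtain ⟨C, hC⟩ := ((hweakL2 g (Lp.memLp g)).norm).bddAbove_range
      exact ⟨C, fun n => by rw [hTval n g]; exact hC ⟨n, rfl⟩⟩
    obtain ⟨C', hC'⟩ := banach_steinhaus hpt
    refine ⟨max C' 0, fun n => ?_⟩
    set Fn : Lp (EuclideanSpace ℝ (Fin d)) 2 μ := (hmemhn n).toLp (hn n) with hFn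
    have hnorm : (eLpNorm (hn n) 2 μ).toReal = ‖Fn‖ := (Lp.norm_toLp _ _).symm
    rw [hnorm]
    rcases eq_or_lt_of_le (norm_nonneg Fn) with h0 | h0
    · rw [← h0]; exact le_max_right _ _
    · have h1 : ‖Fn‖ * ‖Fn‖ = T n Fn := by
        rw [hT]
        simp only [innerSL_apply_apply]
        rw [real_inner_self_eq_norm_mul_norm]
      have h2 : T n Fn ≤ ‖T n‖ * ‖Fn‖ := le_trans (le_abs_self _) ((T n).le_opNorm Fn)
      have h3 : ‖Fn‖ ≤ ‖T n‖ := by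
        have h4 := h1.trans_le h2
        exact le_of_mul_le_mul_right (by linarith) h0
      exact le_max_of_le_left (h3.trans (hC' n))
  have hC₀0 : 0 ≤ C₀ := le_trans ENNReal.toReal_nonneg (hC₀ 0)
  -- helper: inner products of two L² functions are integrable
  have int_inner : ∀ (a b : X → EuclideanSpace ℝ (Fin d)), MemLp a 2 μ → MemLp b 2 μ →
      Integrable (fun x => ⟪a x, b x⟫) μ := by
    intro a b ha hb
    refine (L2.integrable_inner (𝕜 := ℝ) (ha.toLp a) (hb.toLp b)).congr ?_
    filter_upwards [ha.coeFn_toLp, hb.coeFn_toLp] with x h1 h2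
    rw [h1, h2]
  -- key identity for bounded test functions
  have key : ∀ g : X → EuclideanSpace ℝ (Fin d), MemLp g ∞ μ →
      ∫ x, ⟪g x, m x⟫ ∂μ = ∫ x, ⟪g x, Real.sqrt (ρ x) • h x⟫ ∂μ := by
    intro g hgi
    have hg2 : MemLp g 2 μ := hgi.mono_exponent le_top
    have hgw : MemLp g (ENNReal.ofReal (2 * γ / (γ - 1))) μ := hgi.mono_exponent le_top
    set v : X → EuclideanSpace ℝ (Fin d) := fun x => Real.sqrt (ρ x) • g x with hv_def
    set u : ℕ → X → EuclideanSpace ℝ (Fin d) :=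
      fun n x => (Real.sqrt (ρn n x) - Real.sqrt (ρ x)) • g x with hu_def
    have hv : MemLp v 2 μ := MemLp.smul hgi hsρ
    have hu : ∀ n, MemLp (u n) 2 μ :=
      fun n => MemLp.smul hgi ((hsρn n).sub hsρ)
    -- step 1+2: ∫⟪g, mₙ⟫ = ∫⟪v, hₙ⟫ + ∫⟪uₙ, hₙ⟫
    have e12 : ∀ n, ∫ x, ⟪g x, mn n x⟫ ∂μ
        = (∫ x, ⟪v x, hn n x⟫ ∂μ) + ∫ x, ⟪u n x, hn n x⟫ ∂μ := by
      intro n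
      rw [← integral_add (int_inner v (hn n) hv (hmemhn n)) (int_inner (u n) (hn n) (hu n) (hmemhn n))]
      refine integral_congr_ae ?_
      filter_upwards [hmn_eq n] with x hx
      rw [hx]
      simp only [hv_def, hu_def, sub_smul, inner_sub_left, real_inner_smul_left,
        real_inner_smul_right]
      ring
    -- step 3
    have e3 : Tendsto (fun n => ∫ x, ⟪v x, hn n x⟫ ∂μ) atTop (nhds (∫ x, ⟪v x, h x⟫ ∂μ)) :=
      hweakL2 v hv
    -- step 4
    have e4 : Tendsto (fun n => ∫ x, ⟪u n x, hn n x⟫ ∂μ) atTop (nhds 0) := by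
      have hbound : ∀ n, |∫ x, ⟪u n x, hn n x⟫ ∂μ|
          ≤ (eLpNorm (u n) 2 μ).toReal * C₀ := by
        intro n
        have heq : ∫ x, ⟪u n x, hn n x⟫ ∂μ = ⟪(hu n).toLp (u n), (hmemhn n).toLp (hn n)⟫ := by
          rw [L2.inner_def]
          refine integral_congr_ae ?_
          filter_upwards [(hu n).coeFn_toLp, (hmemhn n).coeFn_toLp] with x h1 h2
          rw [h1, h2]
        rw [heq]
        calc |⟪(hu n).toLp (u n), (hmemhn n).toLp (hn n)⟫|
            ≤ ‖(hu n).toLp (u n)‖ * ‖(hmemhn n).toLp (hn n)‖ := abs_real_inner_le_norm _ _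
          _ ≤ (eLpNorm (u n) 2 μ).toReal * C₀ := by
              rw [Lp.norm_toLp, Lp.norm_toLp]
              exact mul_le_mul_of_nonneg_left (hC₀ n) ENNReal.toReal_nonneg
      have hu0 : Tendsto (fun n => (eLpNorm (u n) 2 μ).toReal * C₀) atTop (nhds 0) := by
        have husn : Tendsto (fun n => eLpNorm (u n) 2 μ) atTop (nhds 0) := by
          have hbnd : ∀ n, eLpNorm (u n) 2 μ
              ≤ eLpNorm (fun x => Real.sqrt (ρn n x) - Real.sqrt (ρ x)) 2 μ * eLpNorm g ∞ μ := by
            intro n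
            have := eLpNorm_smul_le_mul_eLpNorm (p := 2) (q := ∞) (r := 2)
              hgi.1 ((hsρn n).sub hsρ).1
            exact this
          have hlim : Tendsto (fun n =>
              eLpNorm (fun x => Real.sqrt (ρn n x) - Real.sqrt (ρ x)) 2 μ * eLpNorm g ∞ μ)
              atTop (nhds 0) := by
            have := ENNReal.Tendsto.mul_const hsconv (Or.inr hgi.2.ne)
            rwa [zero_mul] at this
          exact tendsto_of_tendsto_of_tendsto_of_le_of_le tendsto_const_nhds hlim
            (fun n => zero_le) hbnd
        have := (ENNReal.tendsto_toReal (by simp)).comp husn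
        simpa using this.mul_const C₀
      exact squeeze_zero_norm
        (fun n => le_of_eq_of_le (Real.norm_eq_abs _) (hbound n)) hu0
    -- combine
    have hsum : Tendsto (fun n => ∫ x, ⟪g x, mn n x⟫ ∂μ) atTop
        (nhds ((∫ x, ⟪v x, h x⟫ ∂μ) + 0)) := by
      have := e3.add e4
      refine this.congr fun n => (e12 n).symm
    have := tendsto_nhds_unique (hweakm g hgw) hsum
    rw [add_zero] at this
    rw [this]
    refine integral_congr_ae (Eventually.of_forall fun x => ?_)
    simp only [hv_def, real_inner_smul_left, real_inner_smul_right]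
  -- test with indicators
  have hm1 : Integrable m μ := by
    refine memLp_one_iff_integrable.mp (hmemm.mono_exponent ?_)
    refine ENNReal.one_le_ofReal.mpr ?_
    rw [le_div_iff₀ (by linarith)]; linarith
  have hw1 : Integrable (fun x => Real.sqrt (ρ x) • h x) μ := by
    refine memLp_one_iff_integrable.mp ?_
    have : MemLp ((fun x => Real.sqrt (ρ x)) • h) 1 μ := by
      exact MemLp.smul hmemh hsρ
    exact this
  have hsetint : ∀ (c : EuclideanSpace ℝ (Fin d)) (s : Set X), MeasurableSet s →
      ∫ x in s, ⟪c, m x⟫ ∂μ = ∫ x in s, ⟪c, Real.sqrt (ρ x) • h x⟫ ∂μ := by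
    intro c s hs
    set g : X → EuclideanSpace ℝ (Fin d) := s.indicator (fun _ => c) with hg_def
    have hgi : MemLp g ∞ μ := (memLp_const c).indicator hs
    have hkey := key g hgi
    have hind : ∀ w : X → EuclideanSpace ℝ (Fin d),
        ∫ x, ⟪g x, w x⟫ ∂μ = ∫ x in s, ⟪c, w x⟫ ∂μ := by
      intro w
      rw [← integral_indicator hs]
      refine integral_congr_ae (Eventually.of_forall fun x => ?_)
      by_cases hxs : x ∈ s
      · simp [hg_def, Set.indicator_of_mem hxs]
      · simp [hg_def, Set.indicator_of_notMem hxs]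
    rw [hind m, hind (fun x => Real.sqrt (ρ x) • h x)] at hkey
    exact hkey
  have hinner0 : ∀ c : EuclideanSpace ℝ (Fin d),
      (fun x => (⟪c, m x - Real.sqrt (ρ x) • h x⟫ : ℝ)) =ᵐ[μ] 0 := by
    intro c
    have h1 : Integrable (fun x => ⟪c, m x⟫) μ := hm1.const_inner c
    have h2 : Integrable (fun x => ⟪c, Real.sqrt (ρ x) • h x⟫) μ := hw1.const_inner c
    have heq := Integrable.ae_eq_of_forall_setIntegral_eq _ _ h1 h2
      (fun s hs _ => hsetint c s hs)
    filter_upwards [heq] with x hx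
    simp only [inner_sub_right, hx, Pi.zero_apply, sub_self]
  have hzero : (fun x => m x - Real.sqrt (ρ x) • h x) =ᵐ[μ] 0 :=
    ae_eq_zero_of_forall_inner (𝕜 := ℝ) hinner0
  filter_upwards [hzero] with x hx
  exact sub_eq_zero.mp hx
end

section
/- Let g_n ≥ 0 converge weakly in L¹((0,T)×K) to g with ∫ g_n → ∫ g, where g_n = P(ρ_n) is given by a strictly convex function P of ρ_n ∈ L^γ and ρ_n → ρ weakly in L^γ with g = P(ρ). Then ρ_n → ρ strongly in L^γ((0,T)×K). -/
open MeasureTheory Filter Topology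
open scoped ENNReal

lemma bregman_nonneg {γ : ℝ} (hγ : 1 < γ) {x y : ℝ} (hx : 0 ≤ x) (hy : 0 ≤ y) :
    γ * (x * y ^ (γ - 1)) ≤ x ^ γ + (γ - 1) * y ^ γ := by
  have hγ0 : 0 < γ := lt_trans one_pos hγ
  have hγ1 : 0 < γ - 1 := by linarith
  have hpq : γ.HolderConjugate (γ / (γ - 1)) := Real.HolderConjugate.conjExponent hγ
  have hy1 : (0:ℝ) ≤ y ^ (γ - 1) := Real.rpow_nonneg hy _
  have h := Real.young_inequality_of_nonneg hx hy1 hpq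
  have hyy : (y ^ (γ - 1)) ^ (γ / (γ - 1)) = y ^ γ := by
    rw [← Real.rpow_mul hy]
    congr 1
    field_simp
  rw [hyy] at h
  have hdiv : y ^ γ / (γ / (γ - 1)) = (γ - 1) / γ * y ^ γ := by
    field_simp
  rw [hdiv] at h
  have := mul_le_mul_of_nonneg_left h hγ0.le
  calc γ * (x * y ^ (γ - 1)) ≤ γ * (x ^ γ / γ + (γ - 1) / γ * y ^ γ) := this
    _ = x ^ γ + (γ - 1) * y ^ γ := by field_simp

noncomputable def breg (γ y t : ℝ) : ℝ := t ^ γ - γ * (t * y ^ (γ - 1)) + (γ - 1) * y ^ γ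

lemma rpow_sub_one_mul {y : ℝ} (hy : 0 ≤ y) {γ : ℝ} (hγ : 1 < γ) :
    y ^ (γ - 1) * y = y ^ γ := by
  rcases eq_or_lt_of_le hy with h | h
  · rw [← h, Real.zero_rpow (by linarith), Real.zero_rpow (by linarith), zero_mul]
  · nth_rewrite 2 [← Real.rpow_one y]
    rw [← Real.rpow_add h]
    norm_num

section Aux
variable {γ : ℝ} (hγ : 1 < γ) {y : ℝ} (hy : 0 ≤ y)

include hγ hy in
lemma breg_nonneg {t : ℝ} (ht : 0 ≤ t) : 0 ≤ breg γ y t := by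
  have := bregman_nonneg hγ ht hy
  unfold breg; linarith

include hγ hy in
lemma breg_self : breg γ y y = 0 := by
  unfold breg
  have h := rpow_sub_one_mul hy hγ
  nlinarith [h]

include hγ in
lemma breg_convex_comb {y u v s : ℝ} (hu : 0 ≤ u) (hv : 0 ≤ v) (hs0 : 0 ≤ s) (hs1 : s ≤ 1) :
    breg γ y ((1 - s) * u + s * v) ≤ (1 - s) * breg γ y u + s * breg γ y v := by
  have hconv : ConvexOn ℝ (Set.Ici 0) (fun t : ℝ => t ^ γ) := convexOn_rpow hγ.le
  have h := hconv.2 (Set.mem_Ici.2 hu) (Set.mem_Ici.2 hv) (sub_nonneg.2 hs1) hs0 (show (1-s)+s = 1 by ring)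
  simp only [smul_eq_mul] at h
  unfold breg
  nlinarith [h]

include hγ in
lemma breg_pos {y t : ℝ} (hy : 0 ≤ y) (ht : 0 ≤ t) (hne : t ≠ y) : 0 < breg γ y t := by
  rcases lt_or_eq_of_le (breg_nonneg hγ hy ht) with h | h
  · exact h
  exfalso
  have hstrict : StrictConvexOn ℝ (Set.Ici 0) (fun t : ℝ => t ^ γ) := strictConvexOn_rpow hγ
  have hmid := hstrict.2 (Set.mem_Ici.2 ht) (Set.mem_Ici.2 hy) hne
    (by norm_num : (0:ℝ) < 1/2) (by norm_num : (0:ℝ) < 1/2) (by norm_num)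
  simp only [smul_eq_mul] at hmid
  have hm : 0 ≤ (1/2) * t + (1/2) * y := by positivity
  have h1 := breg_nonneg hγ hy hm
  have h2 := breg_self hγ hy
  unfold breg at h1 h2 h
  nlinarith [hmid]


end Aux

section T
variable {γ : ℝ} (hγ : 1 < γ) {y : ℝ} (hy : 0 ≤ y)

include hγ hy in
lemma breg_le_right {m t : ℝ} (h1 : y ≤ m) (h2 : m ≤ t) : breg γ y m ≤ breg γ y t := by
  rcases eq_or_lt_of_le (h1.trans h2) with h | h
  · have : m = y := le_antisymm (h ▸ h2) h1
    rw [this, ← h]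
  · set s := (m - y) / (t - y) with hs
    have hty : 0 < t - y := by linarith
    have hs0 : 0 ≤ s := div_nonneg (by linarith) hty.le
    have hs1 : s ≤ 1 := (div_le_one hty).2 (by linarith)
    have hm : m = (1 - s) * y + s * t := by rw [hs]; field_simp; ring
    have hc := breg_convex_comb hγ (y := y) hy (le_trans hy h.le) hs0 hs1
    rw [← hm, breg_self hγ hy] at hc
    have hb := breg_nonneg hγ hy (le_trans hy h.le)
    calc breg γ y m ≤ (1 - s) * 0 + s * breg γ y t := hc
      _ ≤ breg γ y t := by nlinarith

include hγ hy in
lemma breg_le_left {m t : ℝ} (h0 : 0 ≤ t) (h1 : t ≤ m) (h2 : m ≤ y) : breg γ y m ≤ breg γ y t := by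
  rcases eq_or_lt_of_le (h1.trans h2) with h | h
  · have : m = y := le_antisymm h2 (h ▸ h1)
    rw [this, h]
  · set s := (y - m) / (y - t) with hs
    have hty : 0 < y - t := by linarith
    have hs0 : 0 ≤ s := div_nonneg (by linarith) hty.le
    have hs1 : s ≤ 1 := (div_le_one hty).2 (by linarith)
    have hm : m = (1 - s) * y + s * t := by rw [hs]; field_simp; ring
    have hc := breg_convex_comb hγ (y := y) hy h0 hs0 hs1
    rw [← hm, breg_self hγ hy] at hc
    have hb := breg_nonneg hγ hy h0
    calc breg γ y m ≤ (1 - s) * 0 + s * breg γ y t := hc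
      _ ≤ breg γ y t := by nlinarith

include hγ hy in
lemma tendsto_of_breg_tendsto {x : ℕ → ℝ} (hx : ∀ k, 0 ≤ x k)
    (h : Tendsto (fun k => breg γ y (x k)) atTop (𝓝 0)) : Tendsto x atTop (𝓝 y) := by
  rw [Metric.tendsto_atTop]
  intro ε hε
  set δ : ℝ := if ε ≤ y then min (breg γ y (y + ε)) (breg γ y (y - ε)) else breg γ y (y + ε)
    with hδdef
  have hδ : 0 < δ := by
    rw [hδdef]
    split_ifs with hcase
    · exact lt_min (breg_pos hγ hy (by linarith) (by intro hc; linarith))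
        (breg_pos hγ hy (by linarith) (by intro hc; linarith))
    · exact breg_pos hγ hy (by linarith) (by intro hc; linarith)
  have hev : ∀ᶠ k in atTop, breg γ y (x k) < δ := h.eventually_lt_const hδ
  rcases eventually_atTop.1 hev with ⟨N, hN⟩
  refine ⟨N, fun k hk => ?_⟩
  rw [Real.dist_eq]
  by_contra hcon
  push_neg at hcon
  rcases le_or_gt (x k) y with hle | hlt
  · have habs : |x k - y| = y - x k := by rw [abs_sub_comm, abs_of_nonneg (by linarith)]
    rw [habs] at hcon
    have hxk : x k ≤ y - ε := by linarith
    have hεy : ε ≤ y := by have := hx k; linarith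
    have hb := breg_le_left hγ hy (hx k) hxk (by linarith)
    have hδle : δ ≤ breg γ y (y - ε) := by rw [hδdef]; simp [hεy]
    exact absurd (hN k hk) (not_lt.2 (hδle.trans hb))
  · have habs : |x k - y| = x k - y := abs_of_nonneg (by linarith)
    rw [habs] at hcon
    have hxk : y + ε ≤ x k := by linarith
    have hb := breg_le_right hγ hy (by linarith : y ≤ y + ε) hxk
    have hδle : δ ≤ breg γ y (y + ε) := by
      rw [hδdef]; split_ifs
      · exact min_le_left _ _
      · exact le_rfl
    exact absurd (hN k hk) (not_lt.2 (hδle.trans hb))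
end T


lemma ennreal_add_rpow_le {γ : ℝ} (hγ : 1 < γ) (u v : ℝ≥0∞) :
    (u + v) ^ γ ≤ 2 ^ (γ - 1) * (u ^ γ + v ^ γ) := by
  have hw : (1/2 : ℝ≥0∞) + 1/2 = 1 := ENNReal.add_halves 1
  have h := ENNReal.rpow_arith_mean_le_arith_mean2_rpow (1/2) (1/2) u v hw hγ.le
  have h2 : (2:ℝ≥0∞) ≠ 0 := two_ne_zero
  have h2t : (2:ℝ≥0∞) ≠ ∞ := ENNReal.ofNat_ne_top
  have huv : u + v = 2 * (1/2 * u + 1/2 * v) := by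
    rw [mul_add, ← mul_assoc, ← mul_assoc]
    rw [show (2:ℝ≥0∞) * (1/2) = 1 by
      rw [one_div, ENNReal.mul_inv_cancel h2 h2t]]
    simp
  calc (u + v) ^ γ = (2 * (1/2 * u + 1/2 * v)) ^ γ := by rw [← huv]
    _ = 2 ^ γ * (1/2 * u + 1/2 * v) ^ γ := ENNReal.mul_rpow_of_nonneg _ _ (by linarith)
    _ ≤ 2 ^ γ * (1/2 * u ^ γ + 1/2 * v ^ γ) := mul_le_mul_right h _
    _ = 2 ^ γ * (1/2) * (u ^ γ + v ^ γ) := by rw [← mul_add, mul_assoc]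
    _ = 2 ^ (γ - 1) * (u ^ γ + v ^ γ) := by
        congr 1
        rw [show γ - 1 = γ + (-1) by ring, ENNReal.rpow_add _ _ h2 h2t,
          ENNReal.rpow_neg_one, one_div]

/-- If `ρ_n ≥ 0` converges weakly in `L^γ` to `ρ` on a finite measure space and the
integrals of the strictly convex function `P(ρ) = (a/(γ−1))ρ^γ` converge,
`∫ P(ρ_n) → ∫ P(ρ)`, then `ρ_n → ρ` strongly in `L^γ`. -/
theorem strong_Lgamma_convergence_of_convex_integrals
    {X : Type*} [MeasurableSpace X] (μ : Measure X) [IsFiniteMeasure μ]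
    (a γ : ℝ) (ha : 0 < a) (hγ : 1 < γ)
    (ρn : ℕ → X → ℝ) (ρ : X → ℝ)
    (hnonneg : ∀ n, 0 ≤ᵐ[μ] ρn n)
    (hmemn : ∀ n, MemLp (ρn n) (ENNReal.ofReal γ) μ)
    (hmem : MemLp ρ (ENNReal.ofReal γ) μ)
    (hweak : ∀ g : X → ℝ, MemLp g (ENNReal.ofReal (γ / (γ - 1))) μ →
      Tendsto (fun n => ∫ x, ρn n x * g x ∂μ) atTop (nhds (∫ x, ρ x * g x ∂μ)))
    (hP : Tendsto (fun n => ∫ x, a / (γ - 1) * ρn n x ^ γ ∂μ) atTop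
      (nhds (∫ x, a / (γ - 1) * ρ x ^ γ ∂μ))) :
    Tendsto (fun n => eLpNorm (ρn n - ρ) (ENNReal.ofReal γ) μ) atTop (nhds 0) := by
  have hγ0 : (0:ℝ) < γ := by linarith
  have hγ1 : (0:ℝ) < γ - 1 := by linarith
  set p : ℝ≥0∞ := ENNReal.ofReal γ with hp
  set q : ℝ≥0∞ := ENNReal.ofReal (γ / (γ - 1)) with hq
  have hp_ne_zero : p ≠ 0 := by
    simp only [hp, ne_eq, ENNReal.ofReal_eq_zero, not_le]; exact hγ0
  have hp_ne_top : p ≠ ∞ := ENNReal.ofReal_ne_top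
  have hp_toReal : p.toReal = γ := ENNReal.toReal_ofReal hγ0.le
  -- Hölder-type integrability of products
  have hpq_sum : (1:ℝ≥0∞) / 1 = 1 / p + 1 / q := by
    have h1 : 1 / p = ENNReal.ofReal (1 / γ) := by
      rw [hp, one_div, one_div, ENNReal.ofReal_inv_of_pos hγ0]
    have h2 : 1 / q = ENNReal.ofReal ((γ - 1) / γ) := by
      rw [hq, one_div, ← ENNReal.ofReal_inv_of_pos (by positivity), inv_div]
    rw [h1, h2, ← ENNReal.ofReal_add (by positivity) (by positivity)]
    rw [show 1 / γ + (γ - 1) / γ = 1 by field_simp; ring]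
    simp
  have hInt_mul : ∀ f g : X → ℝ, MemLp f p μ → MemLp g q μ →
      Integrable (fun x => f x * g x) μ := by
    intro f g hf hg
    have := hg.smul (r := 1) hf (hpqr := ⟨by simpa [one_div] using hpq_sum.symm⟩)
    rw [memLp_one_iff_integrable] at this
    exact this.congr (Eventually.of_forall fun x => by simp [smul_eq_mul])
  -- Step A : ρ ≥ 0 a.e.
  have hρ0 : 0 ≤ᵐ[μ] ρ := by
    obtain ⟨ρ', hρ'meas, hρρ'⟩ := hmem.1
    set s : Set X := {x | ρ' x < 0} with hs
    have hsmeas : MeasurableSet s := measurableSet_lt hρ'meas.measurable measurable_const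
    set g : X → ℝ := s.indicator fun _ => (1:ℝ) with hgdef
    have hgmem : MemLp g q μ := memLp_indicator_const q hsmeas 1 (Or.inr (measure_ne_top μ s))
    have hg_nonneg : ∀ x, 0 ≤ g x := fun x => Set.indicator_nonneg (fun _ _ => zero_le_one) x
    have hlim := hweak g hgmem
    have hnn : ∀ n, 0 ≤ ∫ x, ρn n x * g x ∂μ := by
      intro n
      refine integral_nonneg_of_ae ?_
      filter_upwards [hnonneg n] with x hx
      exact mul_nonneg hx (hg_nonneg x)
    have h0le : 0 ≤ ∫ x, ρ x * g x ∂μ := ge_of_tendsto hlim (Eventually.of_forall hnn)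
    have hint : Integrable (fun x => ρ x * g x) μ := hInt_mul ρ g hmem hgmem
    have hle0 : ∀ᵐ x ∂μ, ρ x * g x ≤ 0 := by
      filter_upwards [hρρ'] with x hx
      by_cases hxs : x ∈ s
      · have hneg : ρ' x < 0 := hxs
        simp only [hgdef, Set.indicator_of_mem hxs, mul_one]
        rw [hx]; exact hneg.le
      · simp [hgdef, Set.indicator_of_notMem hxs]
    have hle : ∫ x, ρ x * g x ∂μ ≤ 0 := integral_nonpos_of_ae hle0
    have hintneg : Integrable (fun x => -(ρ x * g x)) μ := hint.neg
    have hzero : (fun x => -(ρ x * g x)) =ᵐ[μ] 0 := by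
      refine (integral_eq_zero_iff_of_nonneg_ae ?_ hintneg).1 ?_
      · filter_upwards [hle0] with x hx
        simpa using hx
      · rw [integral_neg]; linarith
    have hsnull : ∀ᵐ x ∂μ, x ∉ s := by
      filter_upwards [hzero, hρρ'] with x hx hx' hxs
      have hgx : g x = 1 := by simp [hgdef, Set.indicator_of_mem hxs]
      simp only [Pi.zero_apply, neg_eq_zero, hgx, mul_one] at hx
      have : ρ' x < 0 := hxs
      rw [hx'] at hx
      exact absurd hx this.ne
    filter_upwards [hsnull, hρρ'] with x hx hx'
    have h2 : ¬ ρ' x < 0 := hx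
    simp only [Pi.zero_apply]
    rw [hx']
    exact not_lt.1 h2
  -- Step B : ρ^{γ-1} ∈ L^q
  have hgmem : MemLp (fun x => ρ x ^ (γ - 1)) q μ := by
    have h := hmem.norm_rpow_div (ENNReal.ofReal (γ - 1))
    have ht : (ENNReal.ofReal (γ - 1)).toReal = γ - 1 := ENNReal.toReal_ofReal hγ1.le
    rw [ht] at h
    have hqq : p / ENNReal.ofReal (γ - 1) = q := by
      rw [hp, hq, ENNReal.ofReal_div_of_pos hγ1]
    rw [hqq] at h
    refine h.ae_eq ?_
    filter_upwards [hρ0] with x hx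
    rw [Real.norm_eq_abs, abs_of_nonneg hx]
  -- integrability facts
  have hIntn : ∀ n, Integrable (fun x => ρn n x ^ γ) μ := by
    intro n
    have h := (hmemn n).norm_rpow hp_ne_zero hp_ne_top
    rw [hp_toReal, memLp_one_iff_integrable] at h
    refine h.congr ?_
    filter_upwards [hnonneg n] with x hx
    rw [Real.norm_eq_abs, abs_of_nonneg hx]
  have hIntρ : Integrable (fun x => ρ x ^ γ) μ := by
    have h := hmem.norm_rpow hp_ne_zero hp_ne_top
    rw [hp_toReal, memLp_one_iff_integrable] at h
    refine h.congr ?_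
    filter_upwards [hρ0] with x hx
    rw [Real.norm_eq_abs, abs_of_nonneg hx]
  have hIntmul : ∀ n, Integrable (fun x => ρn n x * ρ x ^ (γ - 1)) μ :=
    fun n => hInt_mul _ _ (hmemn n) hgmem
  -- limit of ∫ ρn^γ
  have hc : a / (γ - 1) ≠ 0 := by positivity
  have hPow : Tendsto (fun n => ∫ x, ρn n x ^ γ ∂μ) atTop (𝓝 (∫ x, ρ x ^ γ ∂μ)) := by
    have h := hP.const_mul ((a / (γ - 1))⁻¹)
    simp_rw [integral_const_mul] at h
    simpa only [inv_mul_cancel_left₀ hc] using h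
  -- limit of ∫ ρn ρ^{γ-1}
  have hMul : Tendsto (fun n => ∫ x, ρn n x * ρ x ^ (γ - 1) ∂μ) atTop
      (𝓝 (∫ x, ρ x ^ γ ∂μ)) := by
    have h := hweak _ hgmem
    have heq : ∫ x, ρ x * ρ x ^ (γ - 1) ∂μ = ∫ x, ρ x ^ γ ∂μ := by
      refine integral_congr_ae ?_
      filter_upwards [hρ0] with x hx
      rw [mul_comm, rpow_sub_one_mul hx hγ]
    rwa [heq] at h
  -- Bregman integral tends to 0
  have hBint : ∀ n, Integrable (fun x => breg γ (ρ x) (ρn n x)) μ := by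
    intro n
    have h := ((hIntn n).sub ((hIntmul n).const_mul γ)).add (hIntρ.const_mul (γ - 1))
    exact h.congr (Eventually.of_forall fun x => by simp [breg])
  have hB : Tendsto (fun n => ∫ x, breg γ (ρ x) (ρn n x) ∂μ) atTop (𝓝 0) := by
    have hlim := (hPow.sub (hMul.const_mul γ)).add_const ((γ - 1) * ∫ x, ρ x ^ γ ∂μ)
    have hval : (∫ x, ρ x ^ γ ∂μ) - γ * (∫ x, ρ x ^ γ ∂μ)
        + (γ - 1) * ∫ x, ρ x ^ γ ∂μ = 0 := by ring
    rw [hval] at hlim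
    refine Tendsto.congr (fun n => ?_) hlim
    have hf1 : Integrable (fun x => ρn n x ^ γ - γ * (ρn n x * ρ x ^ (γ - 1))) μ :=
      (hIntn n).sub ((hIntmul n).const_mul γ)
    have hf2 : Integrable (fun x => (γ - 1) * ρ x ^ γ) μ := hIntρ.const_mul (γ - 1)
    have hf3 : Integrable (fun x => γ * (ρn n x * ρ x ^ (γ - 1))) μ :=
      (hIntmul n).const_mul γ
    have e1 : ∫ x, (ρn n x ^ γ - γ * (ρn n x * ρ x ^ (γ - 1)) + (γ - 1) * ρ x ^ γ) ∂μ
        = (∫ x, ρn n x ^ γ ∂μ) - γ * (∫ x, ρn n x * ρ x ^ (γ - 1) ∂μ)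
          + (γ - 1) * ∫ x, ρ x ^ γ ∂μ := by
      rw [integral_add hf1 hf2, integral_sub (hIntn n) hf3, integral_const_mul,
        integral_const_mul]
    rw [← e1]
    exact integral_congr_ae (Eventually.of_forall fun x => by simp [breg])
  have hBnn : ∀ n, 0 ≤ᵐ[μ] fun x => breg γ (ρ x) (ρn n x) := by
    intro n; filter_upwards [hnonneg n, hρ0] with x h1 h2; exact breg_nonneg hγ h2 h1
  have hBsm : ∀ n, AEStronglyMeasurable (fun x => breg γ (ρ x) (ρn n x)) μ :=
    fun n => (hBint n).aestronglyMeasurable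
  have heLp : Tendsto (fun n => eLpNorm (fun x => breg γ (ρ x) (ρn n x)) 1 μ) atTop (𝓝 0) := by
    have heq : ∀ n, eLpNorm (fun x => breg γ (ρ x) (ρn n x)) 1 μ
        = ENNReal.ofReal (∫ x, breg γ (ρ x) (ρn n x) ∂μ) := by
      intro n
      rw [eLpNorm_one_eq_lintegral_enorm,
        ofReal_integral_eq_lintegral_ofReal (hBint n) (hBnn n)]
      refine lintegral_congr_ae ?_
      filter_upwards [hBnn n] with x hx
      exact Real.enorm_eq_ofReal hx
    refine Tendsto.congr (fun n => (heq n).symm) ?_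
    have h := ENNReal.tendsto_ofReal hB
    simpa using h
  have hIM : TendstoInMeasure μ (fun n x => breg γ (ρ x) (ρn n x)) atTop 0 := by
    refine tendstoInMeasure_of_tendsto_eLpNorm (p := 1) one_ne_zero hBsm
      aestronglyMeasurable_const ?_
    refine Tendsto.congr (fun n => ?_) heLp
    congr 1
    funext x
    simp
  -- pass to subsequences
  refine tendsto_of_subseq_tendsto fun ns hns => ?_
  have hIM' : TendstoInMeasure μ (fun k x => breg γ (ρ x) (ρn (ns k) x)) atTop 0 :=
    fun ε hε => (hIM ε hε).comp hns
  obtain ⟨ms, hms, hae⟩ := hIM'.exists_seq_tendsto_ae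
  refine ⟨ms, ?_⟩
  have hφ : Tendsto (fun i => ns (ms i)) atTop atTop := hns.comp hms.tendsto_atTop
  -- a.e. pointwise convergence along the subsubsequence
  have haen : ∀ᵐ x ∂μ, ∀ n, 0 ≤ ρn n x := (ae_all_iff).2 hnonneg
  have haeconv : ∀ᵐ x ∂μ, Tendsto (fun i => ρn (ns (ms i)) x) atTop (𝓝 (ρ x)) := by
    filter_upwards [hae, haen, hρ0] with x hx hxn hxρ
    refine tendsto_of_breg_tendsto hγ hxρ (fun k => hxn _) ?_
    simpa using hx
  -- the Fatou / Brezis-Lieb argument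
  set A : ℕ → X → ℝ≥0∞ := fun i x => (‖ρn (ns (ms i)) x - ρ x‖₊ : ℝ≥0∞) ^ γ with hA
  set Bf : ℕ → X → ℝ≥0∞ := fun i x =>
    2 ^ (γ - 1) * ((‖ρn (ns (ms i)) x‖₊ : ℝ≥0∞) ^ γ + (‖ρ x‖₊ : ℝ≥0∞) ^ γ) with hBf
  have h2γt : (2:ℝ≥0∞) ^ (γ - 1) ≠ ∞ :=
    ENNReal.rpow_ne_top_of_nonneg (by linarith) ENNReal.ofNat_ne_top
  have hAB : ∀ i x, A i x ≤ Bf i x := by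
    intro i x
    have h1 : (‖ρn (ns (ms i)) x - ρ x‖₊ : ℝ≥0∞) ≤
        (‖ρn (ns (ms i)) x‖₊ : ℝ≥0∞) + (‖ρ x‖₊ : ℝ≥0∞) := by
      exact_mod_cast nnnorm_sub_le _ _
    calc A i x ≤ ((‖ρn (ns (ms i)) x‖₊ : ℝ≥0∞) + (‖ρ x‖₊ : ℝ≥0∞)) ^ γ :=
          ENNReal.rpow_le_rpow h1 hγ0.le
      _ ≤ Bf i x := ennreal_add_rpow_le hγ _ _
  have hAmeas : ∀ i, AEMeasurable (A i) μ := fun i =>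
    (ENNReal.continuous_rpow_const.measurable).comp_aemeasurable
      ((hmemn (ns (ms i))).1.sub hmem.1).enorm
  have hnmeas : ∀ i, AEMeasurable (fun x => (‖ρn (ns (ms i)) x‖₊ : ℝ≥0∞) ^ γ) μ := fun i =>
    (ENNReal.continuous_rpow_const.measurable).comp_aemeasurable (hmemn (ns (ms i))).1.enorm
  have hρmeas2 : AEMeasurable (fun x => (‖ρ x‖₊ : ℝ≥0∞) ^ γ) μ :=
    (ENNReal.continuous_rpow_const.measurable).comp_aemeasurable hmem.1.enorm
  have hBmeas : ∀ i, AEMeasurable (Bf i) μ := fun i =>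
    (((hnmeas i).add hρmeas2).const_mul _)
  -- identification of lintegrals with Bochner integrals
  have hEρ : ∫⁻ x, (‖ρ x‖₊ : ℝ≥0∞) ^ γ ∂μ = ENNReal.ofReal (∫ x, ρ x ^ γ ∂μ) := by
    rw [ofReal_integral_eq_lintegral_ofReal hIntρ
      (by filter_upwards [hρ0] with x hx; simpa using Real.rpow_nonneg hx γ)]
    refine lintegral_congr_ae ?_
    filter_upwards [hρ0] with x hx
    rw [← enorm_eq_nnnorm, Real.enorm_eq_ofReal hx, ENNReal.ofReal_rpow_of_nonneg hx hγ0.le]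
  have hEn : ∀ i, ∫⁻ x, (‖ρn (ns (ms i)) x‖₊ : ℝ≥0∞) ^ γ ∂μ
      = ENNReal.ofReal (∫ x, ρn (ns (ms i)) x ^ γ ∂μ) := by
    intro i
    rw [ofReal_integral_eq_lintegral_ofReal (hIntn _)
      (by filter_upwards [hnonneg (ns (ms i))] with x hx; simpa using Real.rpow_nonneg hx γ)]
    refine lintegral_congr_ae ?_
    filter_upwards [hnonneg (ns (ms i))] with x hx
    rw [← enorm_eq_nnnorm, Real.enorm_eq_ofReal hx, ENNReal.ofReal_rpow_of_nonneg hx hγ0.le]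
  have hBfint : ∀ i, ∫⁻ x, Bf i x ∂μ = 2 ^ (γ - 1) *
      (ENNReal.ofReal (∫ x, ρn (ns (ms i)) x ^ γ ∂μ) + ENNReal.ofReal (∫ x, ρ x ^ γ ∂μ)) := by
    intro i
    rw [hBf]
    rw [lintegral_const_mul' _ _ h2γt, lintegral_add_left' (hnmeas i),
      hEn i, hEρ]
  set L : ℝ≥0∞ := 2 ^ (γ - 1) *
      (ENNReal.ofReal (∫ x, ρ x ^ γ ∂μ) + ENNReal.ofReal (∫ x, ρ x ^ γ ∂μ)) with hL
  have hLne : L ≠ ∞ := by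
    rw [hL]
    exact ENNReal.mul_ne_top h2γt (ENNReal.add_ne_top.2 ⟨ENNReal.ofReal_ne_top,
      ENNReal.ofReal_ne_top⟩)
  have hBtend : Tendsto (fun i => ∫⁻ x, Bf i x ∂μ) atTop (𝓝 L) := by
    simp_rw [hBfint]
    rw [hL]
    refine ENNReal.Tendsto.const_mul ?_ (Or.inr h2γt)
    exact ((ENNReal.tendsto_ofReal (hPow.comp hφ)).add tendsto_const_nhds)
  have hBAtend : ∀ᵐ x ∂μ, Tendsto (fun i => Bf i x - A i x) atTop
      (𝓝 (2 ^ (γ - 1) * ((‖ρ x‖₊ : ℝ≥0∞) ^ γ + (‖ρ x‖₊ : ℝ≥0∞) ^ γ))) := by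
    filter_upwards [haeconv] with x hx
    have h1 : Tendsto (fun i => ρn (ns (ms i)) x - ρ x) atTop (𝓝 0) := by
      simpa using hx.sub_const (ρ x)
    have h2 : Tendsto (fun i => (‖ρn (ns (ms i)) x - ρ x‖₊ : ℝ≥0∞)) atTop (𝓝 0) := by
      have h0 := (continuous_nnnorm.tendsto (0:ℝ)).comp h1
      rw [show ‖(0:ℝ)‖₊ = 0 by simp] at h0
      simpa using ENNReal.tendsto_coe.2 h0
    have hAx : Tendsto (fun i => A i x) atTop (𝓝 0) := by
      have := (ENNReal.continuous_rpow_const (y := γ)).tendsto 0 |>.comp h2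
      rw [ENNReal.zero_rpow_of_pos hγ0] at this; exact this
    have h3 : Tendsto (fun i => (‖ρn (ns (ms i)) x‖₊ : ℝ≥0∞)) atTop (𝓝 (‖ρ x‖₊ : ℝ≥0∞)) :=
      ENNReal.tendsto_coe.2 ((continuous_nnnorm.tendsto (ρ x)).comp hx)
    have h4 : Tendsto (fun i => (‖ρn (ns (ms i)) x‖₊ : ℝ≥0∞) ^ γ) atTop
        (𝓝 ((‖ρ x‖₊ : ℝ≥0∞) ^ γ)) :=
      ((ENNReal.continuous_rpow_const (y := γ)).tendsto _).comp h3
    have hBx : Tendsto (fun i => Bf i x) atTop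
        (𝓝 (2 ^ (γ - 1) * ((‖ρ x‖₊ : ℝ≥0∞) ^ γ + (‖ρ x‖₊ : ℝ≥0∞) ^ γ))) := by
      refine ENNReal.Tendsto.const_mul (h4.add tendsto_const_nhds) (Or.inr h2γt)
    have := ENNReal.Tendsto.sub hBx hAx (Or.inr (by simp))
    simpa using this
  have hLint : ∫⁻ x, 2 ^ (γ - 1) * ((‖ρ x‖₊ : ℝ≥0∞) ^ γ + (‖ρ x‖₊ : ℝ≥0∞) ^ γ) ∂μ = L := by
    rw [lintegral_const_mul' _ _ h2γt, lintegral_add_left' hρmeas2, hEρ, hL]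
  have hfatou : L ≤ atTop.liminf fun i => ∫⁻ x, (Bf i x - A i x) ∂μ := by
    have hmle : ∀ i, AEMeasurable (fun x => Bf i x - A i x) μ := fun i =>
      (hBmeas i).sub (hAmeas i)
    refine le_trans ?_ (lintegral_liminf_le' hmle)
    rw [← hLint]
    refine lintegral_mono_ae ?_
    filter_upwards [hBAtend] with x hx
    rw [hx.liminf_eq]
  have hupper : ∀ i, ∫⁻ x, (Bf i x - A i x) ∂μ ≤ ∫⁻ x, Bf i x ∂μ := fun i =>
    lintegral_mono fun x => tsub_le_self
  have hBAlim : Tendsto (fun i => ∫⁻ x, (Bf i x - A i x) ∂μ) atTop (𝓝 L) := by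
    refine tendsto_of_le_liminf_of_limsup_le hfatou ?_
    calc atTop.limsup (fun i => ∫⁻ x, (Bf i x - A i x) ∂μ)
        ≤ atTop.limsup (fun i => ∫⁻ x, Bf i x ∂μ) :=
          limsup_le_limsup (Eventually.of_forall hupper)
      _ = L := hBtend.limsup_eq
  have hBfinite : ∀ i, ∫⁻ x, Bf i x ∂μ ≠ ∞ := by
    intro i
    rw [hBfint i]
    exact ENNReal.mul_ne_top h2γt (ENNReal.add_ne_top.2 ⟨ENNReal.ofReal_ne_top,
      ENNReal.ofReal_ne_top⟩)
  have hAeq : ∀ i, ∫⁻ x, A i x ∂μ = ∫⁻ x, Bf i x ∂μ - ∫⁻ x, (Bf i x - A i x) ∂μ := by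
    intro i
    have hsum : (∫⁻ x, A i x ∂μ) + ∫⁻ x, (Bf i x - A i x) ∂μ = ∫⁻ x, Bf i x ∂μ := by
      rw [← lintegral_add_left' (hAmeas i)]
      refine lintegral_congr fun x => ?_
      rw [add_comm]
      exact tsub_add_cancel_of_le (hAB i x)
    exact ENNReal.eq_sub_of_add_eq (ne_top_of_le_ne_top (hBfinite i) (hupper i)) hsum
  have hAlim : Tendsto (fun i => ∫⁻ x, A i x ∂μ) atTop (𝓝 0) := by
    have := ENNReal.Tendsto.sub hBtend hBAlim (Or.inl hLne)
    rw [tsub_self] at this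
    exact Tendsto.congr (fun i => (hAeq i).symm) this
  -- conclude
  have hnorm : ∀ i, eLpNorm (ρn (ns (ms i)) - ρ) p μ = (∫⁻ x, A i x ∂μ) ^ (1/γ) := by
    intro i
    rw [eLpNorm_eq_lintegral_rpow_enorm_toReal hp_ne_zero hp_ne_top, hp_toReal]
    rfl
  refine Tendsto.congr (fun i => (hnorm i).symm) ?_
  have := (ENNReal.continuous_rpow_const (y := 1/γ)).tendsto 0 |>.comp hAlim
  rw [ENNReal.zero_rpow_of_pos (show (0:ℝ) < 1/γ by positivity)] at this; exact this
end
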